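/- arXiv:0803.0463 — 5 statements merged into one kernel-verified Lean document; each statement's English description precedes it below -/
import Mathlib

section
/- Let F be a free semigroup and S a subsemigroup of F with c.d. S = 1. Suppose a ∈ F∖S is such that aS ∩ S ≠ ∅ and Sa ∩ S ≠ ∅. Then there exists x ∈ aS ∩ S such that aS ∩ S ⊆ xF¹ (i.e. every element of aS ∩ S equals x or xw for some w ∈ F). -/
structure SgModule (S : Type) [Semigroup S] where
  carrier : Type
  [grp : AddCommGroup carrier]
  smul : S → carrier → carrier
  smul_add : ∀ s a b, smul s (a + b) = smul s a + smul s b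
  mul_smul : ∀ s t a, smul (s * t) a = smul s (smul t a)

attribute [instance] SgModule.grp

/-- `altSign k a = (-1)^k • a`. -/
def altSign {A : Type} [AddCommGroup A] (k : ℕ) (a : A) : A :=
  if Even k then a else -a

lemma altSign_add {A : Type} [AddCommGroup A] (k : ℕ) (a b : A) :
    altSign k (a + b) = altSign k a + altSign k b := by
  unfold altSign; split <;> [rfl; exact neg_add a b]

def mulContract {S : Type} [Mul S] {n : ℕ} (x : Fin (n + 1) → S) (i : Fin n) :
    Fin n → S := fun j =>
  if (j : ℕ) < (i : ℕ) then x j.castSucc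
  else if (j : ℕ) = (i : ℕ) then x j.castSucc * x j.succ
  else x j.succ

namespace SgModule

variable {S : Type} [Semigroup S] (M : SgModule S)

abbrev cochain (n : ℕ) : Type := (Fin n → S) → M.carrier

def cobFun {n : ℕ} (f : M.cochain n) : M.cochain (n + 1) := fun x =>
  M.smul (x 0) (f (Fin.tail x))
    + (∑ i : Fin n, altSign ((i : ℕ) + 1) (f (mulContract x i)))
    + altSign (n + 1) (f (Fin.init x))

lemma cobFun_add {n : ℕ} (f g : M.cochain n) :
    M.cobFun (f + g) = M.cobFun f + M.cobFun g := by
  funext x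
  show M.cobFun (f + g) x = M.cobFun f x + M.cobFun g x
  unfold cobFun
  simp only [Pi.add_apply, altSign_add, M.smul_add]
  rw [Finset.sum_add_distrib]
  abel

def cob (n : ℕ) : M.cochain n →+ M.cochain (n + 1) :=
  AddMonoidHom.mk' M.cobFun M.cobFun_add

def cocycles (n : ℕ) : AddSubgroup (M.cochain n) := (M.cob n).ker

def cobounds : (n : ℕ) → AddSubgroup (M.cochain n)
  | 0 => ⊥
  | n + 1 => (M.cob n).range

def cohomology (n : ℕ) : Type :=
  M.cocycles n ⧸ (M.cobounds n).addSubgroupOf (M.cocycles n)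

noncomputable instance (n : ℕ) : AddCommGroup (M.cohomology n) := by
  unfold cohomology; infer_instance

end SgModule

noncomputable def cohDim (S : Type) [Semigroup S] : ℕ∞ :=
  sSup {e : ℕ∞ | ∃ n : ℕ, e = (n : ℕ∞) ∧ ∃ M : SgModule S, Nontrivial (M.cohomology n)}

def IsFreeSemigroup (T : Type) [Semigroup T] : Prop :=
  ∃ X : Type, Nonempty (T ≃* FreeSemigroup X)



namespace CdOneAux

open Finsupp

variable {X : Type}

/-- The word of letters of a free semigroup element. -/
def toL (w : FreeSemigroup X) : List X := w.head :: w.tail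

lemma toL_mul (x y : FreeSemigroup X) : toL (x * y) = toL x ++ toL y := by
  simp [toL]

lemma toL_injective : Function.Injective (toL (X := X)) := by
  intro x y h
  cases x; cases y
  simp only [toL, List.cons.injEq] at h
  simp [h.1, h.2]

lemma toL_ne_nil (w : FreeSemigroup X) : toL w ≠ [] := by simp [toL]

lemma toL_surj (l : List X) (hl : l ≠ []) : ∃ w : FreeSemigroup X, toL w = l := by
  match l with
  | [] => exact absurd rfl hl
  | x :: t => exact ⟨⟨x, t⟩, rfl⟩

/-- `rho T m` : the shortest prefix of `m` satisfying `T` (junk `[]` if none exists). -/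
noncomputable def rho (T : List X → Prop) (m : List X) : List X := by
  classical exact if h : ∃ n, T (m.take n) then m.take (Nat.find h) else []

lemma rho_spec {T : List X → Prop} {m : List X} (hm : T m) :
    T (rho T m) ∧ (rho T m) <+: m := by
  classical
  have hex : ∃ n, T (m.take n) := ⟨m.length, by simpa using hm⟩
  rw [rho]
  rw [dif_pos hex]
  exact ⟨Nat.find_spec hex, List.take_prefix _ _⟩

lemma rho_append {T : List X → Prop} {m : List X} (hm : T m) (l : List X) :
    rho T (m ++ l) = rho T m := by
  classical
  have hex1 : ∃ n, T (m.take n) := ⟨m.length, by simpa using hm⟩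
  have hex2 : ∃ n, T ((m ++ l).take n) := ⟨m.length, by simpa [List.take_left] using hm⟩
  have hlen : Nat.find hex1 ≤ m.length := Nat.find_min' hex1 (by simpa using hm)
  have htake : ∀ n, n ≤ m.length → (m ++ l).take n = m.take n := by
    intro n hn
    rw [List.take_append, Nat.sub_eq_zero_of_le hn, List.take_zero,
      List.append_nil]
  have h21 : Nat.find hex2 ≤ Nat.find hex1 :=
    Nat.find_min' hex2 (by rw [htake _ hlen]; exact Nat.find_spec hex1)
  have h12 : Nat.find hex1 ≤ Nat.find hex2 :=
    Nat.find_min' hex1 (by have := Nat.find_spec hex2; rwa [htake _ (h21.trans hlen)] at this)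
  have hfind : Nat.find hex1 = Nat.find hex2 := le_antisymm h12 h21
  rw [rho, dif_pos hex2, rho, dif_pos hex1, ← hfind, htake _ hlen]

section Algebra

variable (S : Subsemigroup (FreeSemigroup X))

/-- `J o` : the underlying word of an element of `S¹` (`none` plays the identity). -/
def J (o : Option ↥S) : List X := o.elim [] (fun w => toL (w : FreeSemigroup X))

@[simp] lemma J_none : J S none = ([] : List X) := rfl
@[simp] lemma J_some (w : ↥S) : J S (some w) = toL (w : FreeSemigroup X) := rfl

/-- The free `ℤ[S¹]`-module on basis `S`, as a plain group. -/
abbrev P : Type := (↥S × Option ↥S) →₀ ℤ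

/-- The analogous group with monomials in the ambient free monoid. -/
abbrev PF : Type := (↥S × List X) →₀ ℤ

/-- Group ring of the ambient free monoid. -/
abbrev ZL (X : Type) : Type := List X →₀ ℤ

noncomputable def bdP : P S →+ ZL X :=
  (mapDomain.addMonoidHom fun p => J S p.2 ++ toL (p.1 : FreeSemigroup X))
    - (mapDomain.addMonoidHom fun p => J S p.2)

noncomputable def bdF : PF S →+ ZL X :=
  (mapDomain.addMonoidHom fun p => p.2 ++ toL (p.1 : FreeSemigroup X))
    - (mapDomain.addMonoidHom fun p => p.2)

noncomputable def acts (s : ↥S) : P S →+ P S :=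
  mapDomain.addMonoidHom fun p => (p.1, some (p.2.elim s (s * ·)))

noncomputable def actF (g : List X) : PF S →+ PF S :=
  mapDomain.addMonoidHom fun p => (p.1, g ++ p.2)

noncomputable def emb : P S →+ PF S :=
  mapDomain.addMonoidHom fun p => (p.1, J S p.2)

@[simp] lemma bdP_single (p : ↥S × Option ↥S) (n : ℤ) :
    bdP S (single p n)
      = single (J S p.2 ++ toL (p.1 : FreeSemigroup X)) n - single (J S p.2) n := by
  simp [bdP, mapDomain.addMonoidHom, mapDomain_single]

@[simp] lemma bdF_single (p : ↥S × List X) (n : ℤ) :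
    bdF S (single p n)
      = single (p.2 ++ toL (p.1 : FreeSemigroup X)) n - single p.2 n := by
  simp [bdF, mapDomain.addMonoidHom, mapDomain_single]

@[simp] lemma acts_single (s : ↥S) (p : ↥S × Option ↥S) (n : ℤ) :
    acts S s (single p n) = single (p.1, some (p.2.elim s (s * ·))) n := by
  simp [acts, mapDomain.addMonoidHom, mapDomain_single]

@[simp] lemma actF_single (g : List X) (p : ↥S × List X) (n : ℤ) :
    actF S g (single p n) = single (p.1, g ++ p.2) n := by
  simp [actF, mapDomain.addMonoidHom, mapDomain_single]

@[simp] lemma emb_single (p : ↥S × Option ↥S) (n : ℤ) :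
    emb S (single p n) = single (p.1, J S p.2) n := by
  simp [emb, mapDomain.addMonoidHom, mapDomain_single]

lemma toL_elim (s : ↥S) (o : Option ↥S) :
    toL ((o.elim s (s * ·) : ↥S) : FreeSemigroup X) = toL (s : FreeSemigroup X) ++ J S o := by
  cases o <;> simp [toL_mul]

lemma bdP_acts (s : ↥S) (q : P S) :
    bdP S (acts S s q)
      = mapDomain.addMonoidHom (fun l => toL (s : FreeSemigroup X) ++ l) (bdP S q) := by
  refine DFunLike.congr_fun (Finsupp.addHom_ext fun p n => ?_ :
    (bdP S).comp (acts S s)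
      = (mapDomain.addMonoidHom (fun l => toL (s : FreeSemigroup X) ++ l)).comp (bdP S)) q
  rw [AddMonoidHom.comp_apply, AddMonoidHom.comp_apply, acts_single, bdP_single, bdP_single,
    map_sub]
  simp [mapDomain.addMonoidHom, mapDomain_single, toL_elim, List.append_assoc]

lemma acts_mul (s t : ↥S) (q : P S) : acts S (s * t) q = acts S s (acts S t q) := by
  refine DFunLike.congr_fun (Finsupp.addHom_ext fun p n => ?_ :
    acts S (s * t) = (acts S s).comp (acts S t)) q
  cases hp : p.2 <;> simp [hp, mul_assoc]

lemma emb_acts (s : ↥S) (q : P S) :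
    emb S (acts S s q) = actF S (toL (s : FreeSemigroup X)) (emb S q) := by
  refine DFunLike.congr_fun (Finsupp.addHom_ext fun p n => ?_ :
    (emb S).comp (acts S s) = (actF S (toL (s : FreeSemigroup X))).comp (emb S)) q
  simp [toL_elim]

lemma bdF_emb (q : P S) : bdF S (emb S q) = bdP S q := by
  refine DFunLike.congr_fun (Finsupp.addHom_ext fun p n => ?_ :
    (bdF S).comp (emb S) = bdP S) q
  simp

lemma actF_append (g₁ g₂ : List X) (q : PF S) :
    actF S (g₁ ++ g₂) q = actF S g₁ (actF S g₂ q) := by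
  refine DFunLike.congr_fun (Finsupp.addHom_ext fun p n => ?_ :
    actF S (g₁ ++ g₂) = (actF S g₁).comp (actF S g₂)) q
  simp

lemma actF_injective (g : List X) : Function.Injective (actF S g) := by
  have : Function.Injective (fun p : ↥S × List X => (p.1, g ++ p.2)) := by
    intro p q h
    simp only [Prod.mk.injEq] at h
    exact Prod.ext h.1 (List.append_cancel_left h.2)
  exact Finsupp.mapDomain_injective this

/-- cycles subgroup -/
noncomputable def K : AddSubgroup (P S) := (bdP S).ker

lemma mem_K {q : P S} : q ∈ K S ↔ bdP S q = 0 := AddMonoidHom.mem_ker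

lemma acts_mem_K (s : ↥S) {q : P S} (hq : q ∈ K S) : acts S s q ∈ K S := by
  rw [mem_K] at hq ⊢
  rw [bdP_acts, hq, map_zero]

/-- The coefficient module: the relation module `K`, an `S`-module. -/
noncomputable def Mod : SgModule ↥S where
  carrier := ↥(K S)
  smul s q := ⟨acts S s q.1, acts_mem_K S s q.2⟩
  smul_add s q q' := Subtype.ext (by
    show acts S s (q.1 + q'.1) = acts S s q.1 + acts S s q'.1
    exact map_add _ _ _)
  mul_smul s t q := Subtype.ext (by
    show acts S (s * t) q.1 = acts S s (acts S t q.1)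
    exact acts_mul S s t q.1)

@[simp] lemma Mod_smul_val (s : ↥S) (q : (Mod S).carrier) :
    ((Mod S).smul s q).1 = acts S s q.1 := rfl

/-- basis elements -/
noncomputable def eb (σ : ↥S) : P S := single (σ, none) 1

/-- The standard 2-cocycle measuring the failure of the splitting. -/
noncomputable def fc (x : Fin 2 → ↥S) : P S :=
  single (x 1, some (x 0)) 1 - single (x 0 * x 1, none) 1 + single (x 0, none) 1

lemma fc_eq (x : Fin 2 → ↥S) :
    fc S x = acts S (x 0) (eb S (x 1)) - eb S (x 0 * x 1) + eb S (x 0) := by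
  simp [fc, eb]

lemma fc_mem (x : Fin 2 → ↥S) : fc S x ∈ K S := by
  rw [mem_K, fc]
  simp [map_add, map_sub, toL_mul]

noncomputable def fK : (Mod S).cochain 2 := fun x => ⟨fc S x, fc_mem S x⟩

lemma altSign_one' {A : Type} [AddCommGroup A] (a : A) : altSign 1 a = -a := by
  rw [altSign, if_neg (by decide)]

lemma altSign_two' {A : Type} [AddCommGroup A] (a : A) : altSign 2 a = a := by
  rw [altSign, if_pos (by decide)]

lemma altSign_three' {A : Type} [AddCommGroup A] (a : A) : altSign 3 a = -a := by
  rw [altSign, if_neg (by decide)]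

lemma fK_mem_cocycles : fK S ∈ (Mod S).cocycles 2 := by
  rw [SgModule.cocycles, AddMonoidHom.mem_ker]
  funext x
  show (Mod S).cobFun (fK S) x = 0
  unfold SgModule.cobFun
  rw [Fin.sum_univ_two]
  have i0 : (((0 : Fin 2) : ℕ) + 1) = 1 := rfl
  have i1 : (((1 : Fin 2) : ℕ) + 1) = 2 := rfl
  rw [i0, i1, altSign_one', altSign_two', altSign_three']
  apply Subtype.ext
  have e1 : fc S (Fin.tail x)
      = single (x 2, some (x 1)) 1 - single (x 1 * x 2, none) 1 + single (x 1, none) 1 := rfl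
  have a0 : mulContract x 0 0 = x 0 * x 1 := by simp [mulContract]
  have a1 : mulContract x 0 1 = x 2 := by simp [mulContract]
  have b0 : mulContract x 1 0 = x 0 := by simp [mulContract]
  have b1 : mulContract x 1 1 = x 1 * x 2 := by simp [mulContract]
  have e2 : fc S (mulContract x 0)
      = single (x 2, some (x 0 * x 1)) 1 - single ((x 0 * x 1) * x 2, none) 1
        + single (x 0 * x 1, none) 1 := by
    simp only [fc, a0, a1]
  have e3 : fc S (mulContract x 1)
      = single (x 1 * x 2, some (x 0)) 1 - single (x 0 * (x 1 * x 2), none) 1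
        + single (x 0, none) 1 := by
    simp only [fc, b0, b1]
  have e4 : fc S (Fin.init x)
      = single (x 1, some (x 0)) 1 - single (x 0 * x 1, none) 1 + single (x 0, none) 1 := rfl
  show acts S (x 0) (fc S (Fin.tail x)) + (-(fc S (mulContract x 0)) + fc S (mulContract x 1))
      + -(fc S (Fin.init x)) = 0
  rw [e1, e2, e3, e4]
  rw [map_add, map_sub, acts_single, acts_single, acts_single]
  simp only [Option.elim]
  rw [mul_assoc]
  abel

lemma two_le_cohDim_of_nontrivial {T : Type} [Semigroup T] (M : SgModule T)
    (hnt : Nontrivial (M.cohomology 2)) : (2 : ℕ∞) ≤ cohDim T := by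
  refine le_sSup ?_
  exact ⟨2, by norm_num, M, hnt⟩

/-- From `c.d. S = 1`, the standard 2-cocycle is a coboundary; this produces a
"derivation" splitting the augmentation ideal. -/
lemma exists_splitting (hcd : cohDim ↥S = 1) :
    ∃ h : ↥S → P S,
      (∀ s t : ↥S, h (s * t) = acts S s (h t) + h s) ∧
      (∀ σ : ↥S, bdP S (h σ)
        = single (toL (σ : FreeSemigroup X)) (1 : ℤ) - single [] 1) := by
  -- cohomology in degree 2 is trivial
  have hns : ¬ Nontrivial ((Mod S).cohomology 2) := by
    intro hnt
    have h2 := two_le_cohDim_of_nontrivial (Mod S) hnt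
    rw [hcd] at h2
    exact absurd h2 (by norm_num)
  have hsub : Subsingleton ((Mod S).cohomology 2) := not_nontrivial_iff_subsingleton.mp hns
  unfold SgModule.cohomology at hsub
  have heq : (QuotientAddGroup.mk (⟨fK S, fK_mem_cocycles S⟩ : ((Mod S).cocycles 2))
      : _ ⧸ ((Mod S).cobounds 2).addSubgroupOf ((Mod S).cocycles 2))
      = QuotientAddGroup.mk 0 := Subsingleton.elim _ _
  rw [QuotientAddGroup.eq, AddSubgroup.mem_addSubgroupOf] at heq
  have heq' : -(fK S) ∈ (Mod S).cobounds 2 := by simpa using heq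
  have hcb : (Mod S).cobounds 2 = ((Mod S).cob 1).range := rfl
  rw [hcb, AddMonoidHom.mem_range] at heq'
  obtain ⟨g0, hg0⟩ := heq'
  have hg : (Mod S).cob 1 (-g0) = fK S := by rw [map_neg, hg0, neg_neg]
  set g : (Mod S).cochain 1 := -g0 with hgdef
  -- the 1-cochain, with values in `P`
  set G : ↥S → P S := fun σ => (g (fun _ : Fin 1 => σ) : ((Mod S).carrier)).1 with hGdef
  have hGK : ∀ σ : ↥S, G σ ∈ K S := fun σ => (g (fun _ : Fin 1 => σ)).2
  -- pointwise form of the coboundary identity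
  have key : ∀ s t : ↥S,
      acts S s (G t) - G (s * t) + G s
        = acts S s (eb S t) - eb S (s * t) + eb S s := by
    intro s t
    have hpt := congrFun hg ![s, t]
    have ht2 : Fin.tail ![s, t] = (fun _ : Fin 1 => t) := by
      funext j; rw [Fin.fin_one_eq_zero j]; rfl
    have hm2 : mulContract ![s, t] 0 = (fun _ : Fin 1 => s * t) := by
      funext j; rw [Fin.fin_one_eq_zero j]; simp [mulContract]
    have hi2 : Fin.init ![s, t] = (fun _ : Fin 1 => s) := by
      funext j; rw [Fin.fin_one_eq_zero j]; rfl
    have hpt' : (Mod S).cobFun g ![s, t] = fK S ![s, t] := hpt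
    unfold SgModule.cobFun at hpt'
    rw [Fin.sum_univ_one] at hpt'
    have i0 : (((0 : Fin 1) : ℕ) + 1) = 1 := rfl
    rw [i0, altSign_one', altSign_two', ht2, hm2, hi2] at hpt'
    have hval := congrArg Subtype.val hpt'
    have hx0 : (![s, t] : Fin 2 → ↥S) 0 = s := rfl
    have hx1 : (![s, t] : Fin 2 → ↥S) 1 = t := rfl
    have hfval : (fK S ![s, t]).1
        = acts S s (eb S t) - eb S (s * t) + eb S s := by
      show fc S ![s, t] = _
      rw [fc_eq, hx0, hx1]
    rw [hfval] at hval
    have hlval : ((((Mod S).smul (![s, t] 0) (g fun _ => t))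
          + -(g fun _ => s * t)) + (g fun _ => s) : ((Mod S).carrier)).1
        = acts S s (G t) - G (s * t) + G s := by
      show acts S (![s, t] 0) (G t) + -(G (s * t)) + G s = _
      rw [hx0]; abel
    rw [hlval] at hval
    exact hval
  refine ⟨fun σ => eb S σ - G σ, ?_, ?_⟩
  · intro s t
    have k0 : acts S s (G t) - G (s * t) + G s
        - (acts S s (eb S t) - eb S (s * t) + eb S s) = 0 := sub_eq_zero.mpr (key s t)
    have hid : (acts S s (eb S t) - acts S s (G t) + (eb S s - G s))
          - (eb S (s * t) - G (s * t))
        = -(acts S s (G t) - G (s * t) + G s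
          - (acts S s (eb S t) - eb S (s * t) + eb S s)) := by abel
    rw [k0, neg_zero] at hid
    have := sub_eq_zero.mp hid
    rw [map_sub]
    exact this.symm
  · intro σ
    have h0 : bdP S (G σ) = 0 := (mem_K S).mp (hGK σ)
    rw [map_sub, h0, sub_zero, eb, bdP_single]
    simp

/-- the target set of words: words of elements of `aS ∩ S`. -/
def Tp (a : FreeSemigroup X) : List X → Prop :=
  fun m => ∃ u : ↥S, a * (u : FreeSemigroup X) ∈ S ∧ m = toL (a * (u : FreeSemigroup X))

end Algebra

end CdOneAux

/-- If `S` is a subsemigroup of a free semigroup `F` with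
`c.d. S = 1` and `a ∈ F ∖ S` satisfies `aS ∩ S ≠ ∅ ≠ Sa ∩ S`, then there is
`x ∈ aS ∩ S` with `aS ∩ S ⊆ xF¹`. -/
theorem subsemigroup_of_free_cd_one_ideal_property
    (X : Type) (S : Subsemigroup (FreeSemigroup X))
    (hcd : cohDim ↥S = 1)
    (a : FreeSemigroup X) (ha : a ∉ S)
    (h₁ : ∃ s ∈ S, a * s ∈ S) (h₂ : ∃ s ∈ S, s * a ∈ S) :
    ∃ x : FreeSemigroup X, (∃ s ∈ S, x = a * s) ∧ x ∈ S ∧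
      ∀ y : FreeSemigroup X, (∃ s ∈ S, y = a * s) → y ∈ S →
        (y = x ∨ ∃ w : FreeSemigroup X, y = x * w) := by
  classical
  open CdOneAux Finsupp in
  obtain ⟨h, hD, hE⟩ := CdOneAux.exists_splitting S hcd
  obtain ⟨s₁, hs₁, hs₁a⟩ := h₁
  obtain ⟨s₂, hs₂, hs₂a⟩ := h₂
  set t0 : ↥S := ⟨s₂, hs₂⟩ with ht0
  set b : ↥S := ⟨s₂ * a, hs₂a⟩ with hbdef
  set H : ↥S → PF S := fun σ => emb S (h σ) with hHdef
  have hDF : ∀ s t : ↥S, H (s * t) = actF S (toL (s : FreeSemigroup X)) (H t) + H s := by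
    intro s t
    show emb S (h (s * t)) = _
    rw [hD, map_add, emb_acts]
  have hEF : ∀ σ : ↥S, bdF S (H σ)
      = single (toL (σ : FreeSemigroup X)) (1 : ℤ) - single [] 1 := by
    intro σ
    show bdF S (emb S (h σ)) = _
    rw [bdF_emb, hE]
  have hsupp : ∀ σ : ↥S, ∀ p ∈ (H σ).support, ∃ o : Option ↥S, p.2 = J S o := by
    intro σ p hp
    have hcoe : H σ = mapDomain (fun p : ↥S × Option ↥S => (p.1, J S p.2)) (h σ) := rfl
    rw [hcoe] at hp
    have hsub := Finsupp.mapDomain_support hp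
    obtain ⟨p₀, _, rfl⟩ := Finset.mem_image.mp hsub
    exact ⟨p₀.2, rfl⟩
  -- the crucial identity : subtracting the two factorizations through `t0 · a`.
  have step8 : ∀ (v v' : ↥S) (hv : a * (v : FreeSemigroup X) ∈ S)
      (hv' : a * (v' : FreeSemigroup X) ∈ S),
      H ⟨a * (v' : FreeSemigroup X), hv'⟩ - H ⟨a * (v : FreeSemigroup X), hv⟩
        = actF S (toL a) (H v' - H v) := by
    have e1 : ∀ (v : ↥S) (hv : a * (v : FreeSemigroup X) ∈ S),
        actF S (toL s₂) (H ⟨a * (v : FreeSemigroup X), hv⟩) + H t0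
          = actF S (toL s₂) (actF S (toL a) (H v)) + H b := by
      intro v hv
      have hmul : t0 * (⟨a * (v : FreeSemigroup X), hv⟩ : ↥S) = b * v := by
        apply Subtype.ext
        show s₂ * (a * (v : FreeSemigroup X)) = (s₂ * a) * (v : FreeSemigroup X)
        rw [mul_assoc]
      have h1 := hDF t0 ⟨a * (v : FreeSemigroup X), hv⟩
      have h2 := hDF b v
      rw [hmul] at h1
      rw [h1] at h2
      have hb2 : toL ((b : FreeSemigroup X)) = toL s₂ ++ toL a := by
        show toL (s₂ * a) = _
        rw [toL_mul]
      rw [hb2, actF_append] at h2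
      exact h2
    intro v v' hv hv'
    have q1 := e1 v hv
    have q2 := e1 v' hv'
    have hsub : actF S (toL s₂)
        (H ⟨a * (v' : FreeSemigroup X), hv'⟩ - H ⟨a * (v : FreeSemigroup X), hv⟩)
        = actF S (toL s₂) (actF S (toL a) (H v' - H v)) := by
      rw [map_sub, map_sub, map_sub]
      have h12 := congrArg₂ (fun p q : PF S => p - q) q2 q1
      simpa using h12
    exact actF_injective S _ hsub
  -- supports lie in `Tp`
  have hTq : ∀ (v v' : ↥S) (hv : a * (v : FreeSemigroup X) ∈ S)
      (hv' : a * (v' : FreeSemigroup X) ∈ S),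
      ∀ p ∈ (H ⟨a * (v' : FreeSemigroup X), hv'⟩
        - H ⟨a * (v : FreeSemigroup X), hv⟩).support, Tp S a p.2 := by
    intro v v' hv hv' p hp
    have h1 : ∃ o : Option ↥S, p.2 = J S o := by
      have := Finsupp.support_sub hp
      rcases Finset.mem_union.mp this with h' | h'
      · exact hsupp _ p h'
      · exact hsupp _ p h'
    have h2 : ∃ o : Option ↥S, p.2 = toL a ++ J S o := by
      rw [step8 v v' hv hv'] at hp
      have hcoe : actF S (toL a) (H v' - H v)
          = mapDomain (fun p : ↥S × List X => (p.1, toL a ++ p.2)) (H v' - H v) := rfl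
      rw [hcoe] at hp
      have hsub := Finsupp.mapDomain_support hp
      obtain ⟨p₀, hp₀, rfl⟩ := Finset.mem_image.mp hsub
      have : ∃ o : Option ↥S, p₀.2 = J S o := by
        have := Finsupp.support_sub hp₀
        rcases Finset.mem_union.mp this with h' | h'
        · exact hsupp _ p₀ h'
        · exact hsupp _ p₀ h'
      obtain ⟨o, ho⟩ := this
      exact ⟨o, by rw [ho]⟩
    obtain ⟨o, ho⟩ := h1
    obtain ⟨o', ho'⟩ := h2
    cases o with
    | none =>
      rw [ho] at ho'
      exact absurd ho' (by simp [toL])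
    | some w =>
      cases o' with
      | none =>
        rw [ho] at ho'
        have hw : (w : FreeSemigroup X) = a := by
          apply toL_injective
          simpa using ho'
        exact absurd (hw ▸ w.2) ha
      | some u =>
        rw [ho] at ho'
        have hw : (w : FreeSemigroup X) = a * (u : FreeSemigroup X) := by
          apply toL_injective
          rw [toL_mul]
          simpa using ho'
        refine ⟨u, hw ▸ w.2, ?_⟩
        rw [ho]
        show toL (w : FreeSemigroup X) = _
        rw [hw]
  -- the invariant
  have step10 : ∀ (v v' : ↥S) (hv : a * (v : FreeSemigroup X) ∈ S)
      (hv' : a * (v' : FreeSemigroup X) ∈ S),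
      rho (Tp S a) (toL (a * (v' : FreeSemigroup X)))
        = rho (Tp S a) (toL (a * (v : FreeSemigroup X))) := by
    intro v v' hv hv'
    set y : ↥S := ⟨a * (v : FreeSemigroup X), hv⟩ with hy
    set y' : ↥S := ⟨a * (v' : FreeSemigroup X), hv'⟩ with hy'
    set q : PF S := H y' - H y with hq
    have hycoe : ((y : FreeSemigroup X)) = a * (v : FreeSemigroup X) := rfl
    have hycoe' : ((y' : FreeSemigroup X)) = a * (v' : FreeSemigroup X) := rfl
    have hbd : bdF S q = single (toL (a * (v' : FreeSemigroup X))) (1 : ℤ)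
        - single (toL (a * (v : FreeSemigroup X))) 1 := by
      rw [hq, map_sub, hEF, hEF, hycoe, hycoe']
      abel
    set R := mapDomain.addMonoidHom (M := ℤ) (rho (Tp S a)) with hR
    have hz : R (bdF S q) = 0 := by
      have hbd2 : bdF S q
          = mapDomain (fun p : ↥S × List X => p.2 ++ toL ((p.1 : FreeSemigroup X))) q
            - mapDomain (fun p : ↥S × List X => p.2) q := rfl
      rw [hbd2, map_sub]
      have hc1 : R (mapDomain (fun p : ↥S × List X => p.2 ++ toL ((p.1 : FreeSemigroup X))) q)
          = mapDomain ((rho (Tp S a)) ∘ fun p : ↥S × List X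
              => p.2 ++ toL ((p.1 : FreeSemigroup X))) q := by
        rw [hR]
        show mapDomain _ _ = _
        rw [← Finsupp.mapDomain_comp]
      have hc2 : R (mapDomain (fun p : ↥S × List X => p.2) q)
          = mapDomain ((rho (Tp S a)) ∘ fun p : ↥S × List X => p.2) q := by
        rw [hR]
        show mapDomain _ _ = _
        rw [← Finsupp.mapDomain_comp]
      rw [hc1, hc2]
      have hcongr := Finsupp.mapDomain_congr (v := q)
        (f := (rho (Tp S a)) ∘ fun p : ↥S × List X => p.2 ++ toL ((p.1 : FreeSemigroup X)))
        (g := (rho (Tp S a)) ∘ fun p : ↥S × List X => p.2)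
        (fun p hp => rho_append (hTq v v' hv hv' p hp) _)
      rw [hcongr]
      exact sub_self _
    have hz2 : R (bdF S q)
        = single (rho (Tp S a) (toL (a * (v' : FreeSemigroup X)))) (1 : ℤ)
          - single (rho (Tp S a) (toL (a * (v : FreeSemigroup X)))) 1 := by
      rw [hbd, map_sub, hR]
      show mapDomain _ _ - mapDomain _ _ = _
      rw [Finsupp.mapDomain_single, Finsupp.mapDomain_single]
    rw [hz] at hz2
    have := sub_eq_zero.mp hz2.symm
    exact (Finsupp.single_left_inj (one_ne_zero)).mp this
  -- conclusion
  have hT1 : Tp S a (toL (a * s₁)) := ⟨⟨s₁, hs₁⟩, hs₁a, rfl⟩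
  obtain ⟨hpT, hppre⟩ := rho_spec hT1
  obtain ⟨u₀, hu₀S, hpeq⟩ := hpT
  refine ⟨a * (u₀ : FreeSemigroup X), ⟨(u₀ : FreeSemigroup X), u₀.2, rfl⟩, hu₀S, ?_⟩
  intro y hy1 hy2
  obtain ⟨s, hs, rfl⟩ := hy1
  have hr : rho (Tp S a) (toL (a * s))
      = rho (Tp S a) (toL (a * s₁)) := step10 ⟨s₁, hs₁⟩ ⟨s, hs⟩ hs₁a hy2
  have hyT : Tp S a (toL (a * s)) := ⟨⟨s, hs⟩, hy2, rfl⟩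
  have hpre : rho (Tp S a) (toL (a * s₁)) <+: toL (a * s) := by
    rw [← hr]
    exact (rho_spec hyT).2
  rw [hpeq] at hpre hppre
  obtain ⟨rest, hrest⟩ := hpre
  by_cases hres : rest = []
  · left
    apply toL_injective
    rw [← hrest, hres, List.append_nil]
  · right
    obtain ⟨w, hw⟩ := toL_surj rest hres
    refine ⟨w, toL_injective ?_⟩
    rw [← hrest, ← hw, toL_mul (a * (u₀ : FreeSemigroup X)) w]
end

section
/- Let F be the free semigroup on two generators a, b. Then both the principal left ideal L = F¹aba = {aba} ∪ F·aba and the principal right ideal R = abaF¹ = {aba} ∪ aba·F have cohomological dimension strictly greater than 1 (and neither is a free semigroup); since R is anti-isomorphic to L, the pair (L, R) is a counterexample to the conjecture that for every subsemigroup S of a free semigroup either S or its anti-isomorphic semigroup has c.d. 1. -/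
set_option linter.unusedSectionVars false
set_option linter.unnecessarySeqFocus false

namespace Aba

def endsAba (l : List Bool) : Prop := l.reverse.take 3 = [true, false, true]
instance : DecidablePred endsAba := fun l => by unfold endsAba; infer_instance
def cutsL (w : List Bool) : Finset ℕ := (Finset.range w.length).filter (fun i => endsAba (w.take i))
def QL (w : List Bool) (i : ℕ) : Prop := cutsL w = {i, i + 2}
instance (w i) : Decidable (QL w i) := by unfold QL; infer_instance
def glc (X Y : List Bool) : ℕ :=
  ((Finset.range Y.length).filter (fun j => QL (X ++ Y.take (j+1)) X.length)).card
def startsAba (l : List Bool) : Prop := l.take 3 = [true, false, true]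
instance : DecidablePred startsAba := fun l => by unfold startsAba; infer_instance
def sliceOk (l : List Bool) : Prop :=
  l.take 3 = [true] ∨ l.take 3 = [true, false] ∨ l.take 3 = [true, false, true]
instance : DecidablePred sliceOk := fun l => by unfold sliceOk; infer_instance
def pcutsR (w : List Bool) : Finset ℕ :=
  (Finset.range w.length).filter (fun i => 3 ≤ i ∧ sliceOk (w.drop i))
def QR (w : List Bool) (i : ℕ) : Prop := pcutsR w = {i, i + 2}
instance (w i) : Decidable (QR w i) := by unfold QR; infer_instance
def grc (X Y : List Bool) : ℕ :=
  ((Finset.range Y.length).filter (fun j => QR (X ++ Y.take (j+1)) X.length)).card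
lemma endsAba_len {l : List Bool} (h : endsAba l) : 3 ≤ l.length := by
  unfold endsAba at h; have := congrArg List.length h
  simp [List.length_take] at this; omega
lemma endsAba_append (X : List Bool) {Y : List Bool} (h : endsAba Y) : endsAba (X ++ Y) := by
  unfold endsAba at *
  rw [List.reverse_append, List.take_append_of_le_length]
  · exact h
  · simpa using endsAba_len (by exact h)
lemma startsAba_len {l : List Bool} (h : startsAba l) : 3 ≤ l.length := by
  unfold startsAba at h; have := congrArg List.length h
  simp [List.length_take] at this; omega
lemma startsAba_append {X : List Bool} (Y : List Bool) (h : startsAba X) : startsAba (X ++ Y) := by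
  unfold startsAba at *
  rw [List.take_append_of_le_length (startsAba_len h)]; exact h
lemma sliceOk_of_startsAba {Z : List Bool} (h : startsAba Z) {m : ℕ} (hm : 1 ≤ m) :
    sliceOk (Z.take m) := by
  unfold startsAba at h
  obtain ⟨z1, Z1, rfl⟩ : ∃ z1 Z1, Z = z1 :: Z1 := by
    cases Z with
    | nil => simp [List.take] at h
    | cons z1 Z1 => exact ⟨z1, Z1, rfl⟩
  obtain ⟨z2, Z2, rfl⟩ : ∃ z2 Z2, Z1 = z2 :: Z2 := by
    cases Z1 with
    | nil => simp [List.take] at h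
    | cons z2 Z2 => exact ⟨z2, Z2, rfl⟩
  obtain ⟨z3, Z3, rfl⟩ : ∃ z3 Z3, Z2 = z3 :: Z3 := by
    cases Z2 with
    | nil => simp [List.take] at h
    | cons z3 Z3 => exact ⟨z3, Z3, rfl⟩
  simp [List.take] at h
  obtain ⟨rfl, rfl, rfl⟩ := h
  unfold sliceOk
  match m, hm with
  | 1, _ => left; rfl
  | 2, _ => right; left; rfl
  | (n+3), _ => right; right; simp [List.take]
lemma mem_cutsL {w : List Bool} {i : ℕ} : i ∈ cutsL w ↔ i < w.length ∧ endsAba (w.take i) := by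
  unfold cutsL; simp [Finset.mem_filter, Finset.mem_range]
lemma mem_pcutsR {w : List Bool} {i : ℕ} :
    i ∈ pcutsR w ↔ i < w.length ∧ (3 ≤ i ∧ sliceOk (w.drop i)) := by
  unfold pcutsR; simp [Finset.mem_filter, Finset.mem_range]

-- ### L-side key lemmas

lemma QL_false_left {A B t' : List Bool} (hA : endsAba A) (hB : 1 ≤ B.length)
    (ht' : t' ≠ []) : ¬ QL (A ++ B ++ t') (A.length + B.length) := by
  intro h
  have hmem : A.length ∈ cutsL (A ++ B ++ t') := by
    rw [mem_cutsL]
    constructor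
    · simp [List.length_append]
      have : 0 < t'.length := List.length_pos_iff.mpr ht'
      omega
    · rw [List.append_assoc, List.take_left]
      exact hA
  rw [QL] at h
  rw [h, Finset.mem_insert, Finset.mem_singleton] at hmem
  omega

lemma QL_false_right {A B t' : List Bool} (hB : endsAba B) (ht' : t' ≠ []) :
    ¬ QL (A ++ B ++ t') A.length := by
  intro h
  have hmem : A.length + B.length ∈ cutsL (A ++ B ++ t') := by
    rw [mem_cutsL]
    constructor
    · simp [List.length_append]
      have : 0 < t'.length := List.length_pos_iff.mpr ht'
      omega
    · rw [List.take_left' (by simp [List.length_append])]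
      exact endsAba_append A hB
  rw [QL] at h
  rw [h, Finset.mem_insert, Finset.mem_singleton] at hmem
  have := endsAba_len hB
  omega

lemma take_ne_nil {C : List Bool} {m : ℕ} (hm : 1 ≤ m) (hC : C ≠ []) : C.take m ≠ [] := by
  intro h
  have := congrArg List.length h
  simp [List.length_take] at this
  rcases this with h1 | h2
  · omega
  · exact hC h2

lemma glc_left (A B C : List Bool) (hA : endsAba A) (hB : 1 ≤ B.length) :
    glc (A ++ B) C = 0 := by
  unfold glc
  rw [Finset.card_eq_zero, Finset.filter_eq_empty_iff]
  intro j hj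
  rw [Finset.mem_range] at hj
  rw [List.length_append]
  apply QL_false_left hA hB
  apply take_ne_nil (by omega)
  intro h; rw [h] at hj; simp at hj

lemma glc_extend (A B C : List Bool) (hB : endsAba B) : glc A (B ++ C) = glc A B := by
  unfold glc
  congr 1
  apply Finset.ext
  intro j
  simp only [Finset.mem_filter, Finset.mem_range, List.length_append]
  constructor
  · rintro ⟨hj, hQ⟩
    by_cases hjB : j < B.length
    · refine ⟨hjB, ?_⟩
      rwa [List.take_append_of_le_length (by omega)] at hQ
    · exfalso
      have hj1 : j + 1 = B.length + (j + 1 - B.length) := by omega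
      rw [hj1, List.take_length_add_append, ← List.append_assoc] at hQ
      exact QL_false_right hB (take_ne_nil (by omega) (by intro h; rw [h] at hj; simp at hj; omega)) hQ
  · rintro ⟨hj, hQ⟩
    refine ⟨by omega, ?_⟩
    rwa [List.take_append_of_le_length (by omega)]

lemma glc_cocycle (A B C : List Bool) (hA : endsAba A) (hB : endsAba B) :
    glc A (B ++ C) = glc A B + glc (A ++ B) C := by
  rw [glc_extend A B C hB, glc_left A B C hA (by have := endsAba_len hB; omega)]
  omega

-- ### R-side key lemmas

lemma QR_false_left {A B t' : List Bool} (hA : 3 ≤ A.length) (hB : startsAba B)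
    (ht' : t' ≠ []) : ¬ QR (A ++ B ++ t') (A.length + B.length) := by
  intro h
  have hmem : A.length ∈ pcutsR (A ++ B ++ t') := by
    rw [mem_pcutsR]
    have hBl := startsAba_len hB
    refine ⟨by simp [List.length_append]; omega, hA, ?_⟩
    rw [List.append_assoc, List.drop_left]
    exact Or.inr (Or.inr (by
      show (B ++ t').take 3 = _
      rw [List.take_append_of_le_length hBl]
      exact hB))
  rw [QR] at h
  rw [h, Finset.mem_insert, Finset.mem_singleton] at hmem
  have := startsAba_len hB
  omega

lemma QR_false_right {A B t' : List Bool} (hB : startsAba B) (hs : sliceOk t')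
    (ht' : t' ≠ []) : ¬ QR (A ++ B ++ t') A.length := by
  intro h
  have hBl := startsAba_len hB
  have hmem : A.length + B.length ∈ pcutsR (A ++ B ++ t') := by
    rw [mem_pcutsR]
    refine ⟨by simp [List.length_append]; have := List.length_pos_iff.mpr ht'; omega,
      by omega, ?_⟩
    rw [List.drop_left' (by simp [List.length_append])]
    exact hs
  rw [QR] at h
  rw [h, Finset.mem_insert, Finset.mem_singleton] at hmem
  omega

lemma grc_left (A B C : List Bool) (hA : 3 ≤ A.length) (hB : startsAba B) :
    grc (A ++ B) C = 0 := by
  unfold grc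
  rw [Finset.card_eq_zero, Finset.filter_eq_empty_iff]
  intro j hj
  rw [Finset.mem_range] at hj
  rw [List.length_append]
  apply QR_false_left hA hB
  apply take_ne_nil (by omega)
  intro h; rw [h] at hj; simp at hj

lemma grc_extend (A B C : List Bool) (hB : startsAba B) (hC : startsAba C) :
    grc A (B ++ C) = grc A B := by
  unfold grc
  congr 1
  apply Finset.ext
  intro j
  simp only [Finset.mem_filter, Finset.mem_range, List.length_append]
  constructor
  · rintro ⟨hj, hQ⟩
    by_cases hjB : j < B.length
    · refine ⟨hjB, ?_⟩
      rwa [List.take_append_of_le_length (by omega)] at hQ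
    · exfalso
      have hj1 : j + 1 = B.length + (j + 1 - B.length) := by omega
      rw [hj1, List.take_length_add_append, ← List.append_assoc] at hQ
      have hCne : C ≠ [] := by intro h; rw [h] at hj; simp at hj; omega
      exact QR_false_right hB (sliceOk_of_startsAba hC (by omega))
        (take_ne_nil (by omega) hCne) hQ
  · rintro ⟨hj, hQ⟩
    refine ⟨by omega, ?_⟩
    rwa [List.take_append_of_le_length (by omega)]

lemma grc_cocycle (A B C : List Bool) (hA : 3 ≤ A.length) (hB : startsAba B)
    (hC : startsAba C) : grc A (B ++ C) = grc A B + grc (A ++ B) C := by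
  rw [grc_extend A B C hB hC, grc_left A B C hA hB]
  omega



def zMod (S : Type) [Semigroup S] : SgModule S where
  carrier := ℤ
  smul := fun _ _ => 0
  smul_add := by intros; simp
  mul_smul := by intros; rfl

lemma altSign_one {A : Type} [AddCommGroup A] (a : A) : altSign 1 a = -a := if_neg (by decide)
lemma altSign_two {A : Type} [AddCommGroup A] (a : A) : altSign 2 a = a := if_pos (by decide)
lemma altSign_three {A : Type} [AddCommGroup A] (a : A) : altSign 3 a = -a := if_neg (by decide)

section EvalLemmas
variable {S : Type} [Semigroup S]

lemma mc0_eq2 (x : Fin 3 → S) : mulContract x 0 = ![x 0 * x 1, x 2] := by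
  funext j; fin_cases j <;> rfl

lemma mc1_eq2 (x : Fin 3 → S) : mulContract x 1 = ![x 0, x 1 * x 2] := by
  funext j; fin_cases j <;> rfl

lemma init_eq2 (x : Fin 3 → S) : Fin.init x = ![x 0, x 1] := by
  funext j; fin_cases j <;> rfl

lemma mc0_eq1 (x : Fin 2 → S) : mulContract x 0 = ![x 0 * x 1] := by
  funext j; fin_cases j <;> rfl

lemma init_eq1 (x : Fin 2 → S) : Fin.init x = ![x 0] := by
  funext j; fin_cases j <;> rfl

lemma zMod_smul (s : S) (a : (zMod S).carrier) : (zMod S).smul s a = 0 := rfl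

lemma zMod_cob2 (h : (zMod S).cochain 2) (x : Fin 3 → S) :
    (zMod S).cobFun h x
      = -(h ![x 0 * x 1, x 2]) + h ![x 0, x 1 * x 2] + -(h ![x 0, x 1]) := by
  unfold SgModule.cobFun
  rw [Fin.sum_univ_two, mc0_eq2, mc1_eq2, init_eq2, zMod_smul]
  norm_num [altSign_one, altSign_two, altSign_three]

lemma zMod_cob1 (f : (zMod S).cochain 1) (x : Fin 2 → S) :
    (zMod S).cobFun f x = -(f ![x 0 * x 1]) + f ![x 0] := by
  unfold SgModule.cobFun
  rw [Fin.sum_univ_one, mc0_eq1, init_eq1, zMod_smul]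
  norm_num [altSign_one, altSign_two, altSign_three]

end EvalLemmas


end Aba

namespace Aba

def wrd (z : FreeSemigroup Bool) : List Bool :=
  FreeMonoid.toList (FreeSemigroup.lift FreeMonoid.of z)

lemma wrd_mul (x y : FreeSemigroup Bool) : wrd (x * y) = wrd x ++ wrd y := by
  unfold wrd; rw [map_mul]; rfl

lemma wrd_of (c : Bool) : wrd (FreeSemigroup.of c) = [c] := rfl

noncomputable abbrev aE : FreeSemigroup Bool := FreeSemigroup.of true
noncomputable abbrev bE : FreeSemigroup Bool := FreeSemigroup.of false
noncomputable abbrev abaE : FreeSemigroup Bool := aE * bE * aE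

lemma wrd_aba : wrd abaE = [true, false, true] := by simp [wrd_mul, wrd_of]

lemma cohDim_L (T : Subsemigroup (FreeSemigroup Bool))
    (hmem : ∀ z, z ∈ T ↔ (z = abaE ∨ ∃ w, z = w * abaE)) :
    1 < cohDim ↥T := by
  have hend : ∀ s : ↥T, endsAba (wrd s.val) := by
    rintro ⟨z, hz⟩
    rcases (hmem z).mp hz with rfl | ⟨w, rfl⟩
    · rw [wrd_aba]; decide
    · rw [wrd_mul, wrd_aba]; exact endsAba_append _ (by decide)
  set M := zMod ↥T with hM
  set g : M.cochain 2
    := (fun x => ((glc (wrd (x 0).val) (wrd (x 1).val) : ℕ) : ℤ)) with hg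
  have gapp : ∀ u v : ↥T, g ![u, v] = ((glc (wrd u.val) (wrd v.val) : ℕ) : ℤ) := by
    intro u v; simp only [hg, Matrix.cons_val_zero, Matrix.cons_val_one, Matrix.head_cons]; rfl
  have coem : ∀ u v : ↥T, ((u * v : ↥T) : FreeSemigroup Bool) = (u : FreeSemigroup Bool) * v :=
    fun u v => rfl
  have hgker : g ∈ M.cocycles 2 := by
    rw [SgModule.cocycles, AddMonoidHom.mem_ker]
    funext x
    show M.cobFun g x = 0
    rw [zMod_cob2, gapp, gapp, gapp, coem, coem, wrd_mul, wrd_mul,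
      glc_cocycle (wrd (x 0).val) (wrd (x 1).val) (wrd (x 2).val) (hend _) (hend _)]
    push_cast
    abel
  have hnc : ∀ f : M.cochain 1, M.cob 1 f ≠ g := by
    intro f hf
    have key : ∀ s t : ↥T, -(f ![s * t]) + f ![s] = ((glc (wrd s.val) (wrd t.val) : ℕ) : ℤ) := by
      intro s t
      have h2 := congrFun hf ![s, t]
      rw [show M.cob 1 f ![s,t] = M.cobFun f ![s,t] from rfl, zMod_cob1, gapp] at h2
      simpa using h2
    set F : ↥T → ℤ := (fun s => f ![s]) with hF
    have key' : ∀ s t : ↥T, -(F (s * t)) + F s = ((glc (wrd s.val) (wrd t.val) : ℕ) : ℤ) := key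
    have m1 : abaE ∈ T := (hmem _).mpr (Or.inl rfl)
    have m2 : (aE*bE) * abaE ∈ T := (hmem _).mpr (Or.inr ⟨_, rfl⟩)
    have m3 : (bE*aE) * abaE ∈ T := (hmem _).mpr (Or.inr ⟨_, rfl⟩)
    have m4 : (bE*aE*aE*bE*bE) * abaE ∈ T := (hmem _).mpr (Or.inr ⟨_, rfl⟩)
    have m5 : (aE*bE*bE) * abaE ∈ T := (hmem _).mpr (Or.inr ⟨_, rfl⟩)
    set qa : ↥T := ⟨abaE, m1⟩
    set p5 : ↥T := ⟨(aE*bE) * abaE, m2⟩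
    set qba : ↥T := ⟨(bE*aE) * abaE, m3⟩
    set u8 : ↥T := ⟨(bE*aE*aE*bE*bE) * abaE, m4⟩
    set u6 : ↥T := ⟨(aE*bE*bE) * abaE, m5⟩
    have hprod1 : qa * qba = p5 * qa := by
      apply Subtype.ext
      show abaE * ((bE*aE) * abaE) = ((aE*bE) * abaE) * abaE
      simp [mul_assoc]
    have hprod2 : qa * u8 = p5 * u6 := by
      apply Subtype.ext
      show abaE * ((bE*aE*aE*bE*bE) * abaE) = ((aE*bE) * abaE) * ((aE*bE*bE) * abaE)
      simp [mul_assoc]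
    have wqa : wrd (qa : FreeSemigroup Bool) = [true,false,true] := wrd_aba
    have wp5 : wrd (p5 : FreeSemigroup Bool) = [true,false,true,false,true] := by
      show wrd ((aE*bE) * abaE) = _
      simp [wrd_mul, wrd_of]
    have wqba : wrd (qba : FreeSemigroup Bool) = [false,true,true,false,true] := by
      show wrd ((bE*aE) * abaE) = _
      simp [wrd_mul, wrd_of]
    have wu8 : wrd (u8 : FreeSemigroup Bool) = [false,true,true,false,false,true,false,true] := by
      show wrd ((bE*aE*aE*bE*bE) * abaE) = _
      simp [wrd_mul, wrd_of]
    have wu6 : wrd (u6 : FreeSemigroup Bool) = [true,false,false,true,false,true] := by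
      show wrd ((aE*bE*bE) * abaE) = _
      simp [wrd_mul, wrd_of]
    have E1 := key' qa qba
    have E2 := key' p5 qa
    have E3 := key' qa u8
    have E4 := key' p5 u6
    rw [wqa, wqba, hprod1] at E1
    rw [wp5, wqa, ] at E2
    rw [wqa, wu8, hprod2] at E3
    rw [wp5, wu6] at E4
    rw [show glc [true,false,true] [false,true,true,false,true] = 3 from by decide] at E1
    rw [show glc [true,false,true,false,true] [true,false,true] = 0 from by decide] at E2
    rw [show glc [true,false,true] [false,true,true,false,false,true,false,true] = 6 from by decide] at E3
    rw [show glc [true,false,true,false,true] [true,false,false,true,false,true] = 0 from by decide] at E4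
    push_cast at E1 E2 E3 E4
    linarith [E1, E2, E3, E4]
  have hnt : Nontrivial (M.cohomology 2) := by
    have hx : ∃ x y : M.cohomology 2, x ≠ y := by
      unfold SgModule.cohomology
      refine ⟨QuotientAddGroup.mk ⟨g, hgker⟩, 0, ?_⟩
      rw [Ne, QuotientAddGroup.eq_zero_iff]
      intro hmem2
      rw [AddSubgroup.mem_addSubgroupOf] at hmem2
      obtain ⟨f, hf⟩ := (show g ∈ (M.cob 1).range from hmem2)
      exact hnc f hf
    obtain ⟨x, y, hxy⟩ := hx
    exact ⟨⟨x, y, hxy⟩⟩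
  have hsup : (2 : ℕ∞) ∈ {e : ℕ∞ | ∃ n : ℕ, e = (n : ℕ∞) ∧
      ∃ M : SgModule ↥T, Nontrivial (M.cohomology n)} :=
    ⟨2, by norm_cast, M, hnt⟩
  calc (1 : ℕ∞) < 2 := by norm_num
    _ ≤ cohDim ↥T := le_sSup hsup

end Aba

namespace Aba

lemma cohDim_R (T : Subsemigroup (FreeSemigroup Bool))
    (hmem : ∀ z, z ∈ T ↔ (z = abaE ∨ ∃ w, z = abaE * w)) :
    1 < cohDim ↥T := by
  have hstart : ∀ s : ↥T, startsAba (wrd s.val) := by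
    rintro ⟨z, hz⟩
    rcases (hmem z).mp hz with rfl | ⟨w, rfl⟩
    · rw [wrd_aba]; decide
    · rw [wrd_mul, wrd_aba]; exact startsAba_append _ (by decide)
  have hlen : ∀ s : ↥T, 3 ≤ (wrd s.val).length := fun s => startsAba_len (hstart s)
  set M := zMod ↥T with hM
  set g : M.cochain 2
    := (fun x => ((grc (wrd (x 0).val) (wrd (x 1).val) : ℕ) : ℤ)) with hg
  have gapp : ∀ u v : ↥T, g ![u, v] = ((grc (wrd u.val) (wrd v.val) : ℕ) : ℤ) := by
    intro u v; simp only [hg, Matrix.cons_val_zero, Matrix.cons_val_one, Matrix.head_cons]; rfl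
  have coem : ∀ u v : ↥T, ((u * v : ↥T) : FreeSemigroup Bool) = (u : FreeSemigroup Bool) * v :=
    fun u v => rfl
  have hgker : g ∈ M.cocycles 2 := by
    rw [SgModule.cocycles, AddMonoidHom.mem_ker]
    funext x
    show M.cobFun g x = 0
    rw [zMod_cob2, gapp, gapp, gapp, coem, coem, wrd_mul, wrd_mul,
      grc_cocycle (wrd (x 0).val) (wrd (x 1).val) (wrd (x 2).val) (hlen _) (hstart _) (hstart _)]
    push_cast
    abel
  have hnc : ∀ f : M.cochain 1, M.cob 1 f ≠ g := by
    intro f hf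
    have key : ∀ s t : ↥T, -(f ![s * t]) + f ![s] = ((grc (wrd s.val) (wrd t.val) : ℕ) : ℤ) := by
      intro s t
      have h2 := congrFun hf ![s, t]
      rw [show M.cob 1 f ![s,t] = M.cobFun f ![s,t] from rfl, zMod_cob1, gapp] at h2
      simpa using h2
    set F : ↥T → ℤ := (fun s => f ![s]) with hF
    have key' : ∀ s t : ↥T, -(F (s * t)) + F s = ((grc (wrd s.val) (wrd t.val) : ℕ) : ℤ) := key
    have m1 : abaE ∈ T := (hmem _).mpr (Or.inl rfl)
    have m2 : abaE * (aE*bE) ∈ T := (hmem _).mpr (Or.inr ⟨_, rfl⟩)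
    have m3 : abaE * (bE*aE) ∈ T := (hmem _).mpr (Or.inr ⟨_, rfl⟩)
    have m4 : abaE * (bE*aE*aE*bE*bE) ∈ T := (hmem _).mpr (Or.inr ⟨_, rfl⟩)
    have m5 : abaE * (aE*bE*bE) ∈ T := (hmem _).mpr (Or.inr ⟨_, rfl⟩)
    set qa : ↥T := ⟨abaE, m1⟩
    set rb : ↥T := ⟨abaE * (aE*bE), m2⟩
    set y1 : ↥T := ⟨abaE * (bE*aE), m3⟩
    set u2 : ↥T := ⟨abaE * (bE*aE*aE*bE*bE), m4⟩
    set y2 : ↥T := ⟨abaE * (aE*bE*bE), m5⟩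
    have hprod1 : qa * y1 = rb * qa := by
      apply Subtype.ext
      show abaE * (abaE * (bE*aE)) = (abaE * (aE*bE)) * abaE
      simp [mul_assoc]
    have hprod2 : qa * u2 = rb * y2 := by
      apply Subtype.ext
      show abaE * (abaE * (bE*aE*aE*bE*bE)) = (abaE * (aE*bE)) * (abaE * (aE*bE*bE))
      simp [mul_assoc]
    have wqa : wrd (qa : FreeSemigroup Bool) = [true,false,true] := wrd_aba
    have wrb : wrd (rb : FreeSemigroup Bool) = [true,false,true,true,false] := by
      show wrd (abaE * (aE*bE)) = _
      simp [wrd_mul, wrd_of]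
    have wy1 : wrd (y1 : FreeSemigroup Bool) = [true,false,true,false,true] := by
      show wrd (abaE * (bE*aE)) = _
      simp [wrd_mul, wrd_of]
    have wu2 : wrd (u2 : FreeSemigroup Bool) = [true,false,true,false,true,true,false,false] := by
      show wrd (abaE * (bE*aE*aE*bE*bE)) = _
      simp [wrd_mul, wrd_of]
    have wy2 : wrd (y2 : FreeSemigroup Bool) = [true,false,true,true,false,false] := by
      show wrd (abaE * (aE*bE*bE)) = _
      simp [wrd_mul, wrd_of]
    have E1 := key' qa y1
    have E2 := key' rb qa
    have E3 := key' qa u2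
    have E4 := key' rb y2
    rw [wqa, wy1, hprod1] at E1
    rw [wrb, wqa] at E2
    rw [wqa, wu2, hprod2] at E3
    rw [wrb, wy2] at E4
    rw [show grc [true,false,true] [true,false,true,false,true] = 2 from by decide] at E1
    rw [show grc [true,false,true,true,false] [true,false,true] = 0 from by decide] at E2
    rw [show grc [true,false,true] [true,false,true,false,true,true,false,false] = 3 from by decide] at E3
    rw [show grc [true,false,true,true,false] [true,false,true,true,false,false] = 0 from by decide] at E4
    push_cast at E1 E2 E3 E4
    linarith [E1, E2, E3, E4]
  have hnt : Nontrivial (M.cohomology 2) := by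
    have hx : ∃ x y : M.cohomology 2, x ≠ y := by
      unfold SgModule.cohomology
      refine ⟨QuotientAddGroup.mk ⟨g, hgker⟩, 0, ?_⟩
      rw [Ne, QuotientAddGroup.eq_zero_iff]
      intro hmem2
      rw [AddSubgroup.mem_addSubgroupOf] at hmem2
      obtain ⟨f, hf⟩ := (show g ∈ (M.cob 1).range from hmem2)
      exact hnc f hf
    obtain ⟨x, y, hxy⟩ := hx
    exact ⟨⟨x, y, hxy⟩⟩
  have hsup : (2 : ℕ∞) ∈ {e : ℕ∞ | ∃ n : ℕ, e = (n : ℕ∞) ∧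
      ∃ M : SgModule ↥T, Nontrivial (M.cohomology n)} :=
    ⟨2, by norm_cast, M, hnt⟩
  calc (1 : ℕ∞) < 2 := by norm_num
    _ ≤ cohDim ↥T := le_sSup hsup

end Aba

namespace Aba

lemma not_free (T : Subsemigroup (FreeSemigroup Bool))
    (hlen : ∀ s : ↥T, 3 ≤ (wrd s.val).length)
    (p q p' q' : ↥T) (hrel : p * q = p' * q')
    (hlp : (wrd p.val).length < 6) (hlq : (wrd q.val).length < 6)
    (hlp' : (wrd p'.val).length < 6) (hlq' : (wrd q'.val).length < 6)
    (hne : (wrd p.val).length ≠ (wrd p'.val).length) :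
    ¬ IsFreeSemigroup ↥T := by
  rintro ⟨X, ⟨e⟩⟩
  have coem : ∀ u v : ↥T, ((u * v : ↥T) : FreeSemigroup Bool) = (u : FreeSemigroup Bool) * v :=
    fun u v => rfl
  have indec : ∀ s : ↥T, (wrd s.val).length < 6 → (e s).tail = [] := by
    intro s hs
    by_contra htail
    obtain ⟨c, rest, hcr⟩ : ∃ c rest, (e s).tail = c :: rest := by
      cases h : (e s).tail with
      | nil => exact absurd h htail
      | cons c rest => exact ⟨c, rest, rfl⟩
    have hdecomp : e s = FreeSemigroup.mk (e s).head [] * FreeSemigroup.mk c rest := by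
      rw [FreeSemigroup.mk_mul_mk, List.nil_append]
      exact FreeSemigroup.ext rfl hcr
    have hs2 : s = e.symm (FreeSemigroup.mk (e s).head []) * e.symm (FreeSemigroup.mk c rest) := by
      rw [← map_mul, ← hdecomp, MulEquiv.symm_apply_apply]
    have hw : (wrd s.val).length
        = (wrd (e.symm (FreeSemigroup.mk (e s).head [])).val).length
          + (wrd (e.symm (FreeSemigroup.mk c rest)).val).length := by
      conv_lhs => rw [hs2]
      rw [coem, wrd_mul, List.length_append]
    have h1 := hlen (e.symm (FreeSemigroup.mk (e s).head []))
    have h2 := hlen (e.symm (FreeSemigroup.mk c rest))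
    omega
  have hPQ : e (p * q) = FreeSemigroup.mk (e p).head [(e q).head] := by
    rw [map_mul]
    conv_lhs => rw [show e p = FreeSemigroup.mk (e p).head [] from
        FreeSemigroup.ext rfl (indec p hlp),
      show e q = FreeSemigroup.mk (e q).head [] from FreeSemigroup.ext rfl (indec q hlq)]
    rfl
  have hPQ' : e (p' * q') = FreeSemigroup.mk (e p').head [(e q').head] := by
    rw [map_mul]
    conv_lhs => rw [show e p' = FreeSemigroup.mk (e p').head [] from
        FreeSemigroup.ext rfl (indec p' hlp'),
      show e q' = FreeSemigroup.mk (e q').head [] from FreeSemigroup.ext rfl (indec q' hlq')]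
    rfl
  have hmk : FreeSemigroup.mk (e p).head [(e q).head]
      = FreeSemigroup.mk (e p').head [(e q').head] := by
    rw [← hPQ, ← hPQ', hrel]
  rw [FreeSemigroup.mk.injEq] at hmk
  obtain ⟨hhead, -⟩ := hmk
  have hep : e p = e p' := by
    refine FreeSemigroup.ext hhead ?_
    rw [indec p hlp, indec p' hlp']
  have : p = p' := e.injective hep
  rw [this] at hne
  exact hne rfl

noncomputable def revHom : FreeSemigroup Bool →ₙ* (FreeSemigroup Bool)ᵐᵒᵖ :=
  FreeSemigroup.lift (fun c => MulOpposite.op (FreeSemigroup.of c))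

noncomputable def revF (z : FreeSemigroup Bool) : FreeSemigroup Bool := (revHom z).unop

lemma revF_of (c : Bool) : revF (FreeSemigroup.of c) = FreeSemigroup.of c := rfl

lemma revF_mul (x y : FreeSemigroup Bool) : revF (x * y) = revF y * revF x := by
  unfold revF; rw [map_mul]; rfl

lemma revF_revF (z : FreeSemigroup Bool) : revF (revF z) = z := by
  induction z using FreeSemigroup.recOnMul with
  | ih1 c => rfl
  | ih2 x y ih1 ih2 => rw [revF_mul, revF_mul, ih1, ih2]

lemma revF_aba : revF abaE = abaE := by
  show revF ((aE * bE) * aE) = _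
  rw [revF_mul, revF_mul, revF_of, revF_of, ← mul_assoc]

lemma anti_iso (Lt Rt : Subsemigroup (FreeSemigroup Bool))
    (hmemL : ∀ z, z ∈ Lt ↔ (z = abaE ∨ ∃ w, z = w * abaE))
    (hmemR : ∀ z, z ∈ Rt ↔ (z = abaE ∨ ∃ w, z = abaE * w)) :
    Nonempty (↥Rt ≃* (↥Lt)ᵐᵒᵖ) := by
  have hRL : ∀ z, z ∈ Rt → revF z ∈ Lt := by
    intro z hz
    rcases (hmemR z).mp hz with rfl | ⟨w, rfl⟩
    · exact (hmemL _).mpr (Or.inl revF_aba)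
    · rw [revF_mul, revF_aba]
      exact (hmemL _).mpr (Or.inr ⟨revF w, rfl⟩)
  have hLR : ∀ z, z ∈ Lt → revF z ∈ Rt := by
    intro z hz
    rcases (hmemL z).mp hz with rfl | ⟨w, rfl⟩
    · exact (hmemR _).mpr (Or.inl revF_aba)
    · rw [revF_mul, revF_aba]
      exact (hmemR _).mpr (Or.inr ⟨revF w, rfl⟩)
  refine ⟨{
    toFun := fun s => MulOpposite.op (⟨revF s.val, hRL _ s.2⟩ : ↥Lt)
    invFun := fun t => (⟨revF (t.unop).val, hLR _ (t.unop).2⟩ : ↥Rt)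
    left_inv := ?_
    right_inv := ?_
    map_mul' := ?_ }⟩
  · intro s
    apply Subtype.ext
    show revF (revF s.val) = s.val
    rw [revF_revF]
  · intro t
    apply MulOpposite.unop_injective
    apply Subtype.ext
    show revF (revF (t.unop).val) = (t.unop).val
    rw [revF_revF]
  · intro s t
    apply MulOpposite.unop_injective
    apply Subtype.ext
    show revF ((s * t : ↥Rt) : FreeSemigroup Bool)
      = revF (t : FreeSemigroup Bool) * revF (s : FreeSemigroup Bool)
    rw [show ((s * t : ↥Rt) : FreeSemigroup Bool)
      = (s : FreeSemigroup Bool) * (t : FreeSemigroup Bool) from rfl, revF_mul]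

end Aba

open Aba in
/-- In the free semigroup `F = ⟨a,b⟩` (the free semigroup on
`Bool`), both the principal left ideal `L = F¹aba` and the principal right
ideal `R = abaF¹` have cohomological dimension `> 1`, neither is free, and `R`
is anti-isomorphic to `L`; so `(L, R)` refutes the conjecture that for every
subsemigroup of a free semigroup either it or its opposite has c.d. 1. -/
theorem principal_ideals_of_aba_counterexample
    (a b : FreeSemigroup Bool) (hab : a = FreeSemigroup.of true)
    (hb : b = FreeSemigroup.of false)
    (L R : Subsemigroup (FreeSemigroup Bool))
    (hL : (L : Set (FreeSemigroup Bool)) =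
      {z | z = a * b * a ∨ ∃ w, z = w * (a * b * a)})
    (hR : (R : Set (FreeSemigroup Bool)) =
      {z | z = a * b * a ∨ ∃ w, z = a * b * a * w}) :
    1 < cohDim ↥L ∧ 1 < cohDim ↥R ∧
      ¬ IsFreeSemigroup ↥L ∧ ¬ IsFreeSemigroup ↥R ∧
      Nonempty (↥R ≃* (↥L)ᵐᵒᵖ) := by
  subst hab hb
  have hmemL : ∀ z, z ∈ L ↔ (z = abaE ∨ ∃ w, z = w * abaE) := by
    intro z
    rw [← SetLike.mem_coe, hL]
    exact Iff.rfl
  have hmemR : ∀ z, z ∈ R ↔ (z = abaE ∨ ∃ w, z = abaE * w) := by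
    intro z
    rw [← SetLike.mem_coe, hR]
    exact Iff.rfl
  have hlenL : ∀ s : ↥L, 3 ≤ (wrd s.val).length := by
    rintro ⟨z, hz⟩
    rcases (hmemL z).mp hz with rfl | ⟨w, rfl⟩
    · rw [wrd_aba]; decide
    · rw [wrd_mul, wrd_aba]; simp
  have hlenR : ∀ s : ↥R, 3 ≤ (wrd s.val).length := by
    rintro ⟨z, hz⟩
    rcases (hmemR z).mp hz with rfl | ⟨w, rfl⟩
    · rw [wrd_aba]; decide
    · rw [wrd_mul, wrd_aba]; simp
  have mL1 : abaE ∈ L := (hmemL _).mpr (Or.inl rfl)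
  have mL2 : (aE*bE)*abaE ∈ L := (hmemL _).mpr (Or.inr ⟨_, rfl⟩)
  have mL3 : (bE*aE)*abaE ∈ L := (hmemL _).mpr (Or.inr ⟨_, rfl⟩)
  have mR1 : abaE ∈ R := (hmemR _).mpr (Or.inl rfl)
  have mR2 : abaE*(bE*aE) ∈ R := (hmemR _).mpr (Or.inr ⟨_, rfl⟩)
  have mR3 : abaE*(aE*bE) ∈ R := (hmemR _).mpr (Or.inr ⟨_, rfl⟩)
  have wL2 : wrd ((aE*bE)*abaE) = [true,false,true,false,true] := by simp [wrd_mul, wrd_of]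
  have wL3 : wrd ((bE*aE)*abaE) = [false,true,true,false,true] := by simp [wrd_mul, wrd_of]
  have wR2 : wrd (abaE*(bE*aE)) = [true,false,true,false,true] := by simp [wrd_mul, wrd_of]
  have wR3 : wrd (abaE*(aE*bE)) = [true,false,true,true,false] := by simp [wrd_mul, wrd_of]
  refine ⟨cohDim_L L hmemL, cohDim_R R hmemR, ?_, ?_, anti_iso L R hmemL hmemR⟩
  · apply not_free L hlenL ⟨_, mL2⟩ ⟨_, mL1⟩ ⟨_, mL1⟩ ⟨_, mL3⟩
    · apply Subtype.ext
      show ((aE*bE)*abaE) * abaE = abaE * ((bE*aE)*abaE)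
      simp [mul_assoc]
    · show (wrd ((aE*bE)*abaE)).length < 6
      rw [wL2]; decide
    · show (wrd abaE).length < 6
      rw [wrd_aba]; decide
    · show (wrd abaE).length < 6
      rw [wrd_aba]; decide
    · show (wrd ((bE*aE)*abaE)).length < 6
      rw [wL3]; decide
    · show (wrd ((aE*bE)*abaE)).length ≠ (wrd abaE).length
      rw [wL2, wrd_aba]; decide
  · apply not_free R hlenR ⟨_, mR1⟩ ⟨_, mR2⟩ ⟨_, mR3⟩ ⟨_, mR1⟩
    · apply Subtype.ext
      show abaE * (abaE*(bE*aE)) = (abaE*(aE*bE)) * abaE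
      simp [mul_assoc]
    · show (wrd abaE).length < 6
      rw [wrd_aba]; decide
    · show (wrd (abaE*(bE*aE))).length < 6
      rw [wR2]; decide
    · show (wrd (abaE*(aE*bE))).length < 6
      rw [wR3]; decide
    · show (wrd abaE).length < 6
      rw [wrd_aba]; decide
    · show (wrd abaE).length ≠ (wrd (abaE*(aE*bE))).length
      rw [wR3, wrd_aba]; decide
end

section
/- Let G(∗) be a modification of a group G and let U be the set of invertible elements of the monoid G(∗). Then: (a) G(∗) satisfies the weak cancellation conditions, i.e. x∗z = y∗z ≠ 0 implies x = y, and z∗x = z∗y ≠ 0 implies x = y; (b) the complement I = G(∗)∖U is a two-sided ideal of G(∗); and (c) if G is finite, then I is nilpotent, i.e. there is k ≥ 1 such that every product of k elements of I equals 0. -/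
/-! ### Modifications of a group -/

/-- A modification `G(∗)` of a group `G`: a semigroup structure on
`G⁰ = G ∪ {0}` such that `x ∗ y ∈ {xy, 0}` for `x, y ∈ G`, `0` is absorbing,
and the identity of `G` remains an identity. -/
structure Modification (G : Type) [Group G] where
  mul : WithZero G → WithZero G → WithZero G
  mul_assoc : ∀ x y z, mul (mul x y) z = mul x (mul y z)
  mul_coe : ∀ x y : G, mul x y = ((x * y : G) : WithZero G) ∨ mul x y = 0
  zero_mul : ∀ x, mul 0 x = 0
  mul_zero : ∀ x, mul x 0 = 0
  one_mul : ∀ x, mul 1 x = x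
  mul_one : ∀ x, mul x 1 = x

/-- The invertible elements of a modification. -/
def Modification.unitSet {G : Type} [Group G] (m : Modification G) :
    Set (WithZero G) :=
  {x | ∃ v, m.mul x v = 1 ∧ m.mul v x = 1}

namespace ModificationAux
variable {G : Type} [Group G] (m : Modification G)

lemma left_ne {a b : WithZero G} (h : m.mul a b ≠ 0) : a ≠ 0 := by
  rintro rfl; exact h (m.zero_mul b)

lemma right_ne {a b : WithZero G} (h : m.mul a b ≠ 0) : b ≠ 0 := by
  rintro rfl; exact h (m.mul_zero a)

lemma cancel_right : ∀ x y z : WithZero G, m.mul x z = m.mul y z → m.mul x z ≠ 0 → x = y := by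
  intro x y z h hne
  obtain ⟨a, rfl⟩ := WithZero.ne_zero_iff_exists.mp (left_ne m hne)
  obtain ⟨c, rfl⟩ := WithZero.ne_zero_iff_exists.mp (right_ne m hne)
  have hy : y ≠ 0 := left_ne m (h ▸ hne)
  obtain ⟨b, rfl⟩ := WithZero.ne_zero_iff_exists.mp hy
  rcases m.mul_coe a c with h1 | h1
  · rcases m.mul_coe b c with h2 | h2
    · rw [h1, h2] at h
      exact WithZero.coe_inj.mpr (mul_right_cancel (WithZero.coe_inj.mp h))
    · rw [h, h2] at hne; exact absurd rfl hne
  · rw [h1] at hne; exact absurd rfl hne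

lemma cancel_left : ∀ x y z : WithZero G, m.mul z x = m.mul z y → m.mul z x ≠ 0 → x = y := by
  intro x y z h hne
  obtain ⟨c, rfl⟩ := WithZero.ne_zero_iff_exists.mp (left_ne m hne)
  obtain ⟨a, rfl⟩ := WithZero.ne_zero_iff_exists.mp (right_ne m hne)
  have hy : y ≠ 0 := right_ne m (h ▸ hne)
  obtain ⟨b, rfl⟩ := WithZero.ne_zero_iff_exists.mp hy
  rcases m.mul_coe c a with h1 | h1
  · rcases m.mul_coe c b with h2 | h2
    · rw [h1, h2] at h
      have := mul_left_cancel (WithZero.coe_inj.mp h)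
      exact WithZero.coe_inj.mpr this
    · rw [h, h2] at hne; exact absurd rfl hne
  · rw [h1] at hne; exact absurd rfl hne

lemma inv_swap {x w : WithZero G} (h : m.mul w x = 1) : m.mul x w = 1 := by
  have hx : x ≠ 0 := by rintro rfl; rw [m.mul_zero] at h; exact zero_ne_one h
  have hw : w ≠ 0 := by rintro rfl; rw [m.zero_mul] at h; exact zero_ne_one h
  obtain ⟨a, rfl⟩ := WithZero.ne_zero_iff_exists.mp hx
  obtain ⟨b, rfl⟩ := WithZero.ne_zero_iff_exists.mp hw
  rcases m.mul_coe a b with h1 | h1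
  · rcases m.mul_coe b a with h2 | h2
    · rw [h2] at h
      have hba : b * a = 1 := by exact_mod_cast h
      have hab : a * b = 1 := by
        simp [eq_inv_of_mul_eq_one_right hba]
      rw [h1, hab]; rfl
    · rw [h2] at h; exact absurd h (by simp)
  · -- m.mul x w = 0 case: x = m.mul x (m.mul w x) = m.mul (m.mul x w) x = 0
    have : (a : WithZero G) = 0 := by
      have e1 : m.mul (a : WithZero G) (m.mul b a) = (a : WithZero G) := by
        rw [h, m.mul_one]
      rw [← m.mul_assoc, h1, m.zero_mul] at e1
      exact e1.symm
    exact absurd this (by simp)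


lemma ideal {x : WithZero G} (hx : x ∉ m.unitSet) (s : WithZero G) :
    m.mul s x ∉ m.unitSet ∧ m.mul x s ∉ m.unitSet := by
  constructor
  · rintro ⟨v, _, hv2⟩
    rw [← m.mul_assoc] at hv2
    exact hx ⟨m.mul v s, inv_swap m hv2, hv2⟩
  · rintro ⟨v, hv1, _⟩
    rw [m.mul_assoc] at hv1
    exact hx ⟨m.mul s v, hv1, inv_swap m hv1⟩

lemma foldl_zero (l : List (WithZero G)) : l.foldl m.mul 0 = 0 := by
  induction l with
  | nil => rfl
  | cons a t ih => simp [List.foldl_cons, m.zero_mul, ih]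

lemma foldl_nonunit {s : WithZero G} (hs : s ∉ m.unitSet) :
    ∀ l : List (WithZero G), l.foldl m.mul s ∉ m.unitSet := by
  intro l
  induction l generalizing s with
  | nil => exact hs
  | cons a t ih => exact ih ((ideal m hs a).2)

lemma mul_foldl (x y : WithZero G) (l : List (WithZero G)) :
    m.mul x (l.foldl m.mul y) = l.foldl m.mul (m.mul x y) := by
  induction l generalizing y with
  | nil => rfl
  | cons a t ih => simp only [List.foldl_cons, ih, m.mul_assoc]

lemma one_mem : (1 : WithZero G) ∈ m.unitSet := ⟨1, m.mul_one 1, m.one_mul 1⟩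

end ModificationAux

open ModificationAux

/-- For a modification `G(∗)` of a group `G` with unit group
`U` and `I = G(∗) ∖ U`: (a) weak cancellation holds; (b) `I` is a two-sided
ideal; (c) if `G` is finite then `I` is nilpotent (some power of `I` consists
only of `0`; products of `k` elements are computed by folding `∗` starting
from the identity). -/
theorem modification_weak_cancellation_ideal_nilpotent
    (G : Type) [Group G] (m : Modification G) :
    ((∀ x y z : WithZero G, m.mul x z = m.mul y z → m.mul x z ≠ 0 → x = y) ∧
      (∀ x y z : WithZero G, m.mul z x = m.mul z y → m.mul z x ≠ 0 → x = y)) ∧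
    (∀ x : WithZero G, x ∉ m.unitSet →
      ∀ s : WithZero G, m.mul s x ∉ m.unitSet ∧ m.mul x s ∉ m.unitSet) ∧
    (Finite G → ∃ k : ℕ, 1 ≤ k ∧
      ∀ l : List (WithZero G), l.length = k → (∀ x ∈ l, x ∉ m.unitSet) →
        l.foldl m.mul 1 = 0) := by
  refine ⟨⟨cancel_right m, cancel_left m⟩, fun x hx s => ideal m hx s, ?_⟩
  intro hG
  haveI := Fintype.ofFinite G
  refine ⟨Fintype.card G, Fintype.card_pos, ?_⟩
  intro l hlen hmem
  by_contra hne
  have hpre : ∀ i : ℕ, (l.take i).foldl m.mul 1 ≠ 0 := by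
    intro i h0
    apply hne
    rw [← List.take_append_drop i l, List.foldl_append, h0, foldl_zero m]
  set k := Fintype.card G with hk
  obtain ⟨i, j, hij, hq⟩ := Fintype.exists_ne_map_eq_of_card_lt
    (fun i : Fin (k + 1) => WithZero.unzero (hpre i)) (by simp; omega)
  wlog hlt : (i : ℕ) < (j : ℕ) generalizing i j
  · exact this j i hij.symm hq.symm (by
      rcases Nat.lt_or_ge (j : ℕ) (i : ℕ) with h | h
      · exact h
      · exact absurd (Fin.ext (Nat.le_antisymm (Nat.le_of_not_lt hlt) h).symm) hij)
  have hpij : (l.take (i : ℕ)).foldl m.mul 1 = (l.take (j : ℕ)).foldl m.mul 1 := by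
    rw [← WithZero.coe_unzero (hpre i), ← WithZero.coe_unzero (hpre j), hq]
  set s : List (WithZero G) := (l.drop (i : ℕ)).take ((j : ℕ) - i) with hsdef
  have htj : l.take (j : ℕ) = l.take (i : ℕ) ++ s := by
    rw [hsdef, ← List.take_add]
    congr 1
    omega
  have hjk : (j : ℕ) ≤ l.length := by
    rw [hlen]
    omega
  have hs_mem : ∀ x ∈ s, x ∉ m.unitSet := fun x hxs =>
    hmem x (List.mem_of_mem_drop (List.mem_of_mem_take hxs))
  set p := (l.take (i : ℕ)).foldl m.mul 1 with hp
  have key : m.mul p (s.foldl m.mul 1) = m.mul p 1 := by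
    rw [htj, List.foldl_append, ← hp] at hpij
    rw [m.mul_one, mul_foldl, m.mul_one]
    exact hpij.symm
  have hpne : m.mul p (s.foldl m.mul 1) ≠ 0 := by
    rw [key, m.mul_one]
    exact hpre i
  have hone : s.foldl m.mul 1 = 1 := cancel_left m _ _ _ key hpne
  have hsnil : s ≠ [] := by
    intro h
    have hslen := congrArg List.length (h ▸ hsdef)
    simp [List.length_take, List.length_drop] at hslen
    omega
  obtain ⟨a, t, hst⟩ := List.exists_cons_of_ne_nil hsnil
  rw [hst] at hone hs_mem
  have hnu : (a :: t).foldl m.mul 1 ∉ m.unitSet := by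
    rw [List.foldl_cons, m.one_mul]
    exact foldl_nonunit m (hs_mem a List.mem_cons_self) t
  rw [hone] at hnu
  exact hnu (one_mem m)
end

section
/- Let L/K be a finite-dimensional normal field extension with Galois group G, let S = G(∗) be a modification of G, let U be the group of invertible elements of S, and assume U is normal in S (x∗U = U∗x for all x ∈ S). Let P = L^U be the fixed field of U and S/U the quotient semigroup of S by the congruence whose classes are {0} and the sets x∗U for x ∈ S∖{0}. Regard L^× as a 0-module over S, where s ∈ S∖{0} = G acts by the Galois action, and P^× as a 0-module over S/U. Let χ : H²₀(S/U, P^×) → H²₀(S, L^×) be the homomorphism induced by the inclusion P^× ↪ L^× and the quotient map S → S/U (pullback of 0-cochains), and let ψ : H²₀(S, L^×) → H²(U, L^×) be induced by restricting 0-cochains to U (products of invertible elements are never 0, so these restrictions are everywhere-defined cochains of the group U). Then the sequence 0 → H²₀(S/U, P^×) →(χ) H²₀(S, L^×) →(ψ) H²(U, L^×) is exact. -/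
set_option linter.unusedSectionVars false
set_option linter.unusedVariables false
set_option linter.unnecessarySeqFocus false


/-! ### 0-cohomology of semigroups with zero -/

/-- A 0-module over a semigroup with zero `S`: the action of the nonzero
elements is distributive and associative whenever the relevant product is
nonzero.  (The value of the action at `0` is irrelevant: 0-cochains are
considered only through their values on tuples with nonzero product.) -/
structure ZeroModule (S : Type) [SemigroupWithZero S] where
  carrier : Type
  [grp : AddCommGroup carrier]
  smul : S → carrier → carrier
  smul_add : ∀ s a b, smul s (a + b) = smul s a + smul s b
  mul_smul : ∀ s t : S, s * t ≠ 0 → ∀ a, smul (s * t) a = smul s (smul t a)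

attribute [instance] ZeroModule.grp

/-- The tuple `x` consists of nonzero elements whose product is nonzero
(computed in the monoid `WithOne S`, so that the empty tuple qualifies). -/
def nzTuple {S : Type} [SemigroupWithZero S] {n : ℕ} (x : Fin n → S) : Prop :=
  (List.ofFn fun i => ((x i : S) : WithOne S)).prod ≠ (((0 : S) : WithOne S))

namespace ZeroModule

variable {S : Type} [SemigroupWithZero S] (M : ZeroModule S)

/-- Total `n`-cochains; a partial 0-cochain is represented by the total
functions agreeing with it on tuples with nonzero product. -/
abbrev cochain (n : ℕ) : Type := (Fin n → S) → M.carrier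

/-- The coboundary map (Eilenberg–MacLane formula). -/
def cobFun {n : ℕ} (f : M.cochain n) : M.cochain (n + 1) := fun x =>
  M.smul (x 0) (f (Fin.tail x))
    + (∑ i : Fin n, altSign ((i : ℕ) + 1) (f (mulContract x i)))
    + altSign (n + 1) (f (Fin.init x))

lemma cobFun_add {n : ℕ} (f g : M.cochain n) :
    M.cobFun (f + g) = M.cobFun f + M.cobFun g := by
  funext x
  show M.cobFun (f + g) x = M.cobFun f x + M.cobFun g x
  unfold cobFun
  simp only [Pi.add_apply, altSign_add, M.smul_add]
  rw [Finset.sum_add_distrib]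
  abel

def cob (n : ℕ) : M.cochain n →+ M.cochain (n + 1) :=
  AddMonoidHom.mk' M.cobFun M.cobFun_add

/-- Cochains vanishing on all tuples with nonzero product, i.e. the total
cochains representing the zero partial cochain. -/
def vanishing (n : ℕ) : AddSubgroup (M.cochain n) where
  carrier := {f | ∀ x : Fin n → S, nzTuple x → f x = 0}
  add_mem' := by
    intro f g hf hg x hx
    simp only [Pi.add_apply, hf x hx, hg x hx, add_zero]
  zero_mem' := fun x _ => rfl
  neg_mem' := by
    intro f hf x hx
    simp only [Pi.neg_apply, hf x hx, neg_zero]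

/-- 0-cocycles: total cochains whose coboundary vanishes on every tuple with
nonzero product. -/
def cocycles (n : ℕ) : AddSubgroup (M.cochain n) :=
  (M.vanishing (n + 1)).comap (M.cob n)

/-- 0-coboundaries: total cochains agreeing with a coboundary on every tuple
with nonzero product. -/
def cobounds : (n : ℕ) → AddSubgroup (M.cochain n)
  | 0 => M.vanishing 0
  | n + 1 => (M.cob n).range ⊔ M.vanishing (n + 1)

/-- The 0-cohomology groups `Hⁿ₀(S, M)`. -/
def cohomology (n : ℕ) : Type :=
  M.cocycles n ⧸ (M.cobounds n).addSubgroupOf (M.cocycles n)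

noncomputable instance (n : ℕ) : AddCommGroup (M.cohomology n) := by
  unfold cohomology; infer_instance

end ZeroModule

/-! ### The underlying semigroup with zero of a modification, and the Galois
0-module `L^×` -/

/-- The underlying semigroup with zero of a modification (a type synonym for
`G⁰ = G ∪ {0}` carrying the multiplication `∗`). -/
def ModS {G : Type} [Group G] (m : Modification G) : Type := WithZero G

/-- The identification of `ModS m` with `G ∪ {0}`. -/
def ModS.toW {G : Type} [Group G] {m : Modification G} (x : ModS m) :
    WithZero G := x

/-- The identification of `G ∪ {0}` with `ModS m`. -/
def ModS.ofW {G : Type} [Group G] (m : Modification G) (x : WithZero G) :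
    ModS m := x

instance {G : Type} [Group G] (m : Modification G) : SemigroupWithZero (ModS m) where
  mul x y := m.mul x.toW y.toW
  mul_assoc := m.mul_assoc
  zero := ModS.ofW m 0
  zero_mul := m.zero_mul
  mul_zero := m.mul_zero

variable (K L : Type) [Field K] [Field L] [Algebra K L]

/-- The action of a Galois automorphism on the units of `L`. -/
noncomputable def galU (σ : L ≃ₐ[K] L) : Lˣ →* Lˣ :=
  Units.map (MonoidHomClass.toMonoidHom σ)

open Classical in
/-- `L^×` as a 0-module over a modification of the Galois group, via the
Galois action. -/
noncomputable def galZeroModule (m : Modification (L ≃ₐ[K] L)) :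
    ZeroModule (ModS m) where
  carrier := Additive Lˣ
  smul s a :=
    if h : s.toW = 0 then 0
    else Additive.ofMul (galU K L (WithZero.unzero h) (Additive.toMul a))
  smul_add s a b := by
    by_cases h : s.toW = 0
    · simp [h]
    · try dsimp only
      rw [dif_neg h, dif_neg h, dif_neg h]
      exact congrArg Additive.ofMul (map_mul _ _ _)
  mul_smul s t hst a := by
    have hst' : (s * t).toW ≠ 0 := fun h0 => hst h0
    have hs : s.toW ≠ 0 := by
      intro h0
      apply hst
      show m.mul s.toW t.toW = ModS.ofW m 0
      have : s.toW = 0 := h0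
      rw [this, m.zero_mul]; rfl
    have ht : t.toW ≠ 0 := by
      intro h0
      apply hst
      show m.mul s.toW t.toW = ModS.ofW m 0
      have : t.toW = 0 := h0
      rw [this, m.mul_zero]; rfl
    obtain ⟨σ, hσ⟩ := WithZero.ne_zero_iff_exists.mp hs
    obtain ⟨τ, hτ⟩ := WithZero.ne_zero_iff_exists.mp ht
    have hmul : (s * t).toW = ((σ * τ : L ≃ₐ[K] L) : WithZero (L ≃ₐ[K] L)) := by
      have : (s * t).toW = m.mul s.toW t.toW := rfl
      rw [this, ← hσ, ← hτ]
      exact (m.mul_coe σ τ).resolve_right (by rw [hσ, hτ]; exact hst')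
    have hu : WithZero.unzero hst' = σ * τ :=
      WithZero.coe_inj.mp ((WithZero.coe_unzero hst').trans hmul)
    have hus : WithZero.unzero hs = σ :=
      WithZero.coe_inj.mp ((WithZero.coe_unzero hs).trans hσ.symm)
    have hut : WithZero.unzero ht = τ :=
      WithZero.coe_inj.mp ((WithZero.coe_unzero ht).trans hτ.symm)
    try dsimp only
    rw [dif_neg hst', dif_neg hs, dif_neg ht, hu, hus, hut]
    have hcomp : galU K L (σ * τ) (Additive.toMul a)
        = galU K L σ (galU K L τ (Additive.toMul a)) := by
      ext
      simp [galU, AlgEquiv.mul_apply]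
    exact congrArg Additive.ofMul hcomp

/-- The subgroup of `L^×` of elements fixed by every invertible element of the
modification; this is `P^×` for `P` the fixed field of `U`. -/
noncomputable def fixedUnits (m : Modification (L ≃ₐ[K] L)) : Subgroup Lˣ where
  carrier := {a | ∀ x : WithZero (L ≃ₐ[K] L), x ∈ m.unitSet → ∀ h : x ≠ 0,
    galU K L (WithZero.unzero h) a = a}
  one_mem' := by intro x hx h; exact map_one _
  mul_mem' := by intro a b ha hb x hx h; rw [map_mul, ha x hx h, hb x hx h]
  inv_mem' := by intro a ha x hx h; rw [map_inv, ha x hx h]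

/-- Building a 0-module from its pieces. -/
def mkZeroModule (Q : Type) [SemigroupWithZero Q] (C : Type) [AddCommGroup C]
    (ρ : Q → C → C) (h₁ : ∀ s a b, ρ s (a + b) = ρ s a + ρ s b)
    (h₂ : ∀ s t : Q, s * t ≠ 0 → ∀ a, ρ (s * t) a = ρ s (ρ t a)) :
    ZeroModule Q :=
  { carrier := C, smul := ρ, smul_add := h₁, mul_smul := h₂ }

/-- Pulling a 2-cochain of the quotient `S/U` with values in `P^×` back to a
2-cochain of `S` with values in `L^×`. -/
noncomputable def pullCochain2 {Q : Type} [SemigroupWithZero Q]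
    (m : Modification (L ≃ₐ[K] L)) (π : ModS m →ₙ* Q)
    (f : (Fin 2 → Q) → Additive ↥(fixedUnits K L m)) :
    (galZeroModule K L m).cochain 2 :=
  fun x => (Additive.ofMul ((Additive.toMul (f fun i => π (x i)) : ↥(fixedUnits K L m)) : Lˣ) : Additive Lˣ)

/-! ### Auxiliary generic lemmas -/

section GenericAux

variable {S : Type} [SemigroupWithZero S]

lemma eq_of_abel {A : Type} [AddCommGroup A] {t1 t2 a b : A} (h : a = b)
    (habel : t1 - t2 = a - b) : t1 = t2 :=
  sub_eq_zero.mp (habel.trans (sub_eq_zero.mpr h))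

lemma fin1_eta (x : Fin 1 → S) : x = ![x 0] := by
  funext i; fin_cases i <;> rfl

lemma fin2_eta (x : Fin 2 → S) : x = ![x 0, x 1] := by
  funext i; fin_cases i <;> rfl

lemma fin3_eta (x : Fin 3 → S) : x = ![x 0, x 1, x 2] := by
  funext i; fin_cases i <;> rfl

lemma coe_ne_zero_iff {x : S} : ((x : WithOne S)) ≠ ((0 : S) : WithOne S) ↔ x ≠ 0 := by
  constructor
  · intro h h0; exact h (congrArg _ h0)
  · intro h h0; exact h (WithOne.coe_inj.mp h0)

lemma nzTuple_pair {x y : S} : nzTuple ![x, y] ↔ x * y ≠ 0 := by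
  unfold nzTuple
  have : (List.ofFn fun i => ((((![x, y] : Fin 2 → S) i : S)) : WithOne S)).prod
      = ((x * y : S) : WithOne S) := by
    simp [List.ofFn_succ, ← WithOne.coe_mul]
  rw [this]; exact coe_ne_zero_iff

lemma nzTuple_triple {x y z : S} : nzTuple ![x, y, z] ↔ x * y * z ≠ 0 := by
  unfold nzTuple
  have : (List.ofFn fun i => ((((![x, y, z] : Fin 3 → S) i : S)) : WithOne S)).prod
      = ((x * y * z : S) : WithOne S) := by
    simp [List.ofFn_succ, ← WithOne.coe_mul, mul_assoc]
  rw [this]; exact coe_ne_zero_iff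

lemma nzt_left {x y : S} (h : x * y ≠ 0) : x ≠ 0 :=
  fun h0 => h (by rw [h0, zero_mul])

lemma nzt_right {x y : S} (h : x * y ≠ 0) : y ≠ 0 :=
  fun h0 => h (by rw [h0, mul_zero])

lemma tail_pair (x y : S) : Fin.tail ![x, y] = ![y] := by
  funext i; fin_cases i <;> rfl

lemma tail_triple (x y z : S) : Fin.tail ![x, y, z] = ![y, z] := by
  funext i; fin_cases i <;> rfl

lemma init_pair (x y : S) : Fin.init ![x, y] = ![x] := by
  funext i; fin_cases i <;> rfl

lemma init_triple (x y z : S) : Fin.init ![x, y, z] = ![x, y] := by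
  funext i; fin_cases i <;> rfl

lemma mulContract_pair (x y : S) : mulContract ![x, y] 0 = ![x * y] := by
  funext i; fin_cases i <;> simp [mulContract]

lemma mulContract_triple₀ (x y z : S) : mulContract ![x, y, z] 0 = ![x * y, z] := by
  funext i; fin_cases i <;> simp [mulContract]

lemma mulContract_triple₁ (x y z : S) : mulContract ![x, y, z] 1 = ![x, y * z] := by
  funext i; fin_cases i <;> simp [mulContract]

lemma altSign_one {A : Type} [AddCommGroup A] (a : A) : altSign 1 a = -a :=
  if_neg (by decide)

lemma altSign_two {A : Type} [AddCommGroup A] (a : A) : altSign 2 a = a :=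
  if_pos (by decide)

lemma altSign_three {A : Type} [AddCommGroup A] (a : A) : altSign 3 a = -a :=
  if_neg (by decide)

namespace ZeroModule

variable (M : ZeroModule S)

lemma smul_zero' (s : S) : M.smul s (0 : M.carrier) = 0 := by
  have h := M.smul_add s 0 0
  rw [add_zero] at h
  exact (left_eq_add.mp h)

lemma smul_neg' (s : S) (a : M.carrier) : M.smul s (-a) = -M.smul s a := by
  have h := M.smul_add s a (-a)
  rw [add_neg_cancel, M.smul_zero'] at h
  exact eq_neg_of_add_eq_zero_right h.symm

lemma smul_sub' (s : S) (a b : M.carrier) :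
    M.smul s (a - b) = M.smul s a - M.smul s b := by
  rw [sub_eq_add_neg, M.smul_add, M.smul_neg', sub_eq_add_neg]

lemma cobFun_pair (t : M.cochain 1) (x y : S) :
    M.cobFun t ![x, y] = M.smul x (t ![y]) - t ![x * y] + t ![x] := by
  show M.smul (![x,y] 0) (t (Fin.tail ![x,y]))
      + (∑ i : Fin 1, altSign ((i : ℕ) + 1) (t (mulContract ![x,y] i)))
      + altSign 2 (t (Fin.init ![x,y])) = _
  rw [Fin.sum_univ_one, tail_pair, init_pair, mulContract_pair, altSign_two]
  show M.smul x (t ![y]) + altSign 1 (t ![x*y]) + t ![x] = _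
  rw [altSign_one, sub_eq_add_neg]

lemma cobFun_triple (g : M.cochain 2) (x y z : S) :
    M.cobFun g ![x, y, z] = M.smul x (g ![y, z]) - g ![x * y, z]
      + g ![x, y * z] - g ![x, y] := by
  show M.smul (![x,y,z] 0) (g (Fin.tail ![x,y,z]))
      + (∑ i : Fin 2, altSign ((i : ℕ) + 1) (g (mulContract ![x,y,z] i)))
      + altSign 3 (g (Fin.init ![x,y,z])) = _
  rw [Fin.sum_univ_two, tail_triple, init_triple, altSign_three]
  show M.smul x (g ![y,z]) + (altSign 1 (g (mulContract ![x,y,z] 0))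
      + altSign 2 (g (mulContract ![x,y,z] 1))) + -(g ![x,y]) = _
  rw [mulContract_triple₀, mulContract_triple₁, altSign_one, altSign_two]
  abel

lemma mem_vanishing₂ {w : M.cochain 2} :
    w ∈ M.vanishing 2 ↔ ∀ x y : S, x * y ≠ 0 → w ![x, y] = 0 := by
  constructor
  · intro h x y hxy; exact h _ (nzTuple_pair.mpr hxy)
  · intro h v hv
    rw [fin2_eta v] at hv ⊢
    exact h _ _ (nzTuple_pair.mp hv)

lemma mem_cocycles₂ {g : M.cochain 2} :
    g ∈ M.cocycles 2 ↔ ∀ x y z : S, x * y * z ≠ 0 →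
      M.smul x (g ![y, z]) - g ![x * y, z] + g ![x, y * z] - g ![x, y] = 0 := by
  show M.cobFun g ∈ M.vanishing 3 ↔ _
  constructor
  · intro h x y z hxyz
    rw [← M.cobFun_triple]
    exact h _ (nzTuple_triple.mpr hxyz)
  · intro h v hv
    rw [fin3_eta v] at hv ⊢
    rw [M.cobFun_triple]
    exact h _ _ _ (nzTuple_triple.mp hv)

lemma mem_cobounds₂ {g : M.cochain 2} :
    g ∈ M.cobounds 2 ↔ ∃ t : M.cochain 1, g - M.cobFun t ∈ M.vanishing 2 := by
  show g ∈ (M.cob 1).range ⊔ M.vanishing 2 ↔ _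
  rw [AddSubgroup.mem_sup]
  constructor
  · rintro ⟨a, ⟨t, rfl⟩, w, hw, rfl⟩
    refine ⟨t, ?_⟩
    show (M.cob 1) t + w - M.cobFun t ∈ M.vanishing 2
    have he : (M.cob 1) t = M.cobFun t := rfl
    rwa [he, add_sub_cancel_left]
  · rintro ⟨t, ht⟩
    exact ⟨M.cobFun t, ⟨t, rfl⟩, g - M.cobFun t, ht, by abel⟩

lemma cobFun_mem_cocycles (t : M.cochain 1) : M.cobFun t ∈ M.cocycles 2 := by
  rw [mem_cocycles₂]
  intro x y z h
  have hxy : x * y ≠ 0 := nzt_left h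
  have hyz : y * z ≠ 0 := nzt_right (by rwa [mul_assoc] at h)
  rw [M.cobFun_pair, M.cobFun_pair, M.cobFun_pair, M.cobFun_pair]
  rw [M.smul_add, M.smul_sub', ← M.mul_smul x y hxy, mul_assoc]
  abel

end ZeroModule

end GenericAux

/-! ### Auxiliary lemmas on modifications -/

section ModAux

variable {G : Type} [Group G] {m : Modification G}

/-- The inclusion of `G` into `ModS m`. -/
def eM (m : Modification G) (σ : G) : ModS m := ModS.ofW m (σ : WithZero G)

/-- The identity element of `ModS m`. -/
def oneS (m : Modification G) : ModS m := ModS.ofW m 1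

lemma mmul_def (x y : ModS m) : x * y = ModS.ofW m (m.mul x.toW y.toW) := rfl

lemma toW_eq_zero {x : ModS m} : x.toW = 0 ↔ x = 0 := Iff.rfl

lemma eM_one : eM m 1 = oneS m := by
  show ModS.ofW m ((1 : G) : WithZero G) = ModS.ofW m 1
  rw [WithZero.coe_one]

lemma eM_ne_zero (σ : G) : eM m σ ≠ 0 := fun h =>
  WithZero.coe_ne_zero (show ((σ : WithZero G)) = 0 from h)

lemma eM_injective : Function.Injective (eM m) := fun σ τ h =>
  WithZero.coe_inj.mp h

lemma modS_cases (x : ModS m) : x = 0 ∨ ∃ σ : G, x = eM m σ := by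
  by_cases h : x = 0
  · left; exact h
  · right
    obtain ⟨σ, hσ⟩ := WithZero.ne_zero_iff_exists.mp (show x.toW ≠ 0 from h)
    exact ⟨σ, hσ.symm⟩

lemma eM_mul_or (σ τ : G) :
    eM m σ * eM m τ = eM m (σ * τ) ∨ eM m σ * eM m τ = 0 := m.mul_coe σ τ

lemma eM_mul_of_ne {σ τ : G} (h : eM m σ * eM m τ ≠ 0) :
    eM m σ * eM m τ = eM m (σ * τ) := (eM_mul_or σ τ).resolve_right h

lemma mul_oneS (x : ModS m) : x * oneS m = x := m.mul_one x.toW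

lemma oneS_mul (x : ModS m) : oneS m * x = x := m.one_mul x.toW

lemma oneS_mem_unitSet : (oneS m).toW ∈ m.unitSet :=
  ⟨1, m.mul_one 1, m.one_mul 1⟩

lemma unit_ne_zero {u : ModS m} (hu : u.toW ∈ m.unitSet) : u ≠ 0 := by
  obtain ⟨v, h1, _⟩ := hu
  intro h0
  have : u.toW = 0 := h0
  rw [this, m.zero_mul] at h1
  exact zero_ne_one h1

/-- A unit of `ModS m`, together with its inverse. -/
lemma unit_inv_exists {u : ModS m} (hu : u.toW ∈ m.unitSet) :
    ∃ v : ModS m, v.toW ∈ m.unitSet ∧ u * v = oneS m ∧ v * u = oneS m := by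
  obtain ⟨v, h1, h2⟩ := hu
  exact ⟨ModS.ofW m v, ⟨u.toW, h2, h1⟩, h1, h2⟩

lemma mul_unit_ne_zero {x u : ModS m} (hx : x ≠ 0) (hu : u.toW ∈ m.unitSet) :
    x * u ≠ 0 := by
  obtain ⟨v, _, huv, _⟩ := unit_inv_exists hu
  intro h0
  apply hx
  have : x * u * v = x * (u * v) := mul_assoc x u v
  rw [h0, zero_mul, huv, mul_oneS] at this
  exact this.symm

lemma unit_mul_ne_zero {x u : ModS m} (hx : x ≠ 0) (hu : u.toW ∈ m.unitSet) :
    u * x ≠ 0 := by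
  obtain ⟨v, _, _, hvu⟩ := unit_inv_exists hu
  intro h0
  apply hx
  have : v * u * x = v * (u * x) := mul_assoc v u x
  rw [h0, mul_zero, hvu, oneS_mul] at this
  exact this

lemma unit_mul_mem {u v : ModS m} (hu : u.toW ∈ m.unitSet)
    (hv : v.toW ∈ m.unitSet) : (u * v).toW ∈ m.unitSet := by
  obtain ⟨u', hu', huu', hu'u⟩ := unit_inv_exists hu
  obtain ⟨v', hv', hvv', hv'v⟩ := unit_inv_exists hv
  refine ⟨(v' * u').toW, ?_, ?_⟩
  · show (u * v) * (v' * u') = oneS m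
    rw [mul_assoc u v (v' * u'), ← mul_assoc v v' u', hvv', oneS_mul, huu']
  · show (v' * u') * (u * v) = oneS m
    rw [mul_assoc v' u' (u * v), ← mul_assoc u' u v, hu'u, oneS_mul, hv'v]

lemma unit_eq_eM {u : ModS m} (hu : u ≠ 0) :
    u = eM m (WithZero.unzero (toW_eq_zero.not.mpr hu)) := by
  exact (WithZero.coe_unzero _).symm

lemma cancel_unit_right {x u v : ModS m} (hx : x ≠ 0)
    (hu : u.toW ∈ m.unitSet) (hv : v.toW ∈ m.unitSet)
    (h : x * u = x * v) : u = v := by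
  obtain ⟨ξ, hξ⟩ := (modS_cases x).resolve_left hx
  obtain ⟨ω₁, hω₁⟩ := (modS_cases u).resolve_left (unit_ne_zero hu)
  obtain ⟨ω₂, hω₂⟩ := (modS_cases v).resolve_left (unit_ne_zero hv)
  subst hξ hω₁ hω₂
  have h1 : eM m ξ * eM m ω₁ = eM m (ξ * ω₁) :=
    eM_mul_of_ne (mul_unit_ne_zero hx hu)
  have h2 : eM m ξ * eM m ω₂ = eM m (ξ * ω₂) :=
    eM_mul_of_ne (mul_unit_ne_zero hx hv)
  rw [h1, h2] at h
  have := mul_left_cancel (eM_injective h)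
  rw [this]

end ModAux

/-! ### Auxiliary lemmas on the Galois 0-module -/

section GalAux

variable {K L : Type} [Field K] [Field L] [Algebra K L]
variable {m : Modification (L ≃ₐ[K] L)}

lemma gsmul_def {x : ModS m} (hx : x ≠ 0) (a : Additive Lˣ) :
    (galZeroModule K L m).smul x a
      = Additive.ofMul (galU K L (WithZero.unzero (toW_eq_zero.not.mpr hx))
          (Additive.toMul a)) :=
  dif_neg (toW_eq_zero.not.mpr hx)

lemma gsmul_eM (σ : L ≃ₐ[K] L) (a : Additive Lˣ) :
    (galZeroModule K L m).smul (eM m σ) a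
      = Additive.ofMul (galU K L σ (Additive.toMul a)) := by
  rw [gsmul_def (eM_ne_zero σ)]
  have h : WithZero.unzero (toW_eq_zero.not.mpr (eM_ne_zero (m := m) σ)) = σ :=
    WithZero.coe_inj.mp (WithZero.coe_unzero _)
  rw [h]

lemma galU_one (w : Lˣ) : galU K L 1 w = w := by
  ext; rfl

lemma gsmul_oneS (a : Additive Lˣ) :
    (galZeroModule K L m).smul (oneS m) a = a := by
  rw [← eM_one, gsmul_eM, galU_one]
  rfl

lemma gsmul_fixed {c : Additive Lˣ}
    (hc : Additive.toMul c ∈ fixedUnits K L m)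
    {u : ModS m} (hu : u.toW ∈ m.unitSet) :
    (galZeroModule K L m).smul u c = c := by
  have hne := unit_ne_zero hu
  rw [gsmul_def hne, hc u.toW hu _]
  rfl

lemma mem_fixed_of_gsmul {c : Additive Lˣ}
    (hc : ∀ u : ModS m, u.toW ∈ m.unitSet → (galZeroModule K L m).smul u c = c) :
    Additive.toMul c ∈ fixedUnits K L m := by
  intro x hx h
  have := hc (ModS.ofW m x) hx
  rw [gsmul_def (show ModS.ofW m x ≠ 0 from h)] at this
  have := congrArg Additive.toMul this
  exact this

/-- The inclusion of the fixed units into `L^×`, additively. -/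
def jmap (K L : Type) [Field K] [Field L] [Algebra K L]
    (m : Modification (L ≃ₐ[K] L)) :
    Additive ↥(fixedUnits K L m) → (galZeroModule K L m).carrier := fun a =>
  Additive.ofMul ((Additive.toMul a : ↥(fixedUnits K L m)) : Lˣ)

lemma jmap_add (a b : Additive ↥(fixedUnits K L m)) :
    jmap K L m (a + b) = jmap K L m a + jmap K L m b := rfl

lemma jmap_zero : jmap K L m 0 = 0 := rfl

lemma jmap_neg (a : Additive ↥(fixedUnits K L m)) :
    jmap K L m (-a) = -(jmap K L m a) := rfl

lemma jmap_sub (a b : Additive ↥(fixedUnits K L m)) :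
    jmap K L m (a - b) = jmap K L m a - jmap K L m b := rfl

lemma jmap_injective : Function.Injective (jmap K L m) := by
  intro a b h
  have h' : ((Additive.toMul a : ↥(fixedUnits K L m)) : Lˣ)
      = ((Additive.toMul b : ↥(fixedUnits K L m)) : Lˣ) := h
  exact Additive.toMul.injective (Subtype.ext h')

lemma toMul_jmap_mem (a : Additive ↥(fixedUnits K L m)) :
    Additive.toMul (jmap K L m a) ∈ fixedUnits K L m :=
  (Additive.toMul a).2

end GalAux

/-! ### Hilbert 90 for the unit group of a modification -/

section H90

variable (K L : Type) [Field K] [Field L] [Algebra K L] [FiniteDimensional K L]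
variable (m : Modification (L ≃ₐ[K] L))

/-- The units of the modification, as a subgroup of the Galois group. -/
def uGroup : Subgroup (L ≃ₐ[K] L) where
  carrier := {σ | ((σ : WithZero (L ≃ₐ[K] L))) ∈ m.unitSet}
  one_mem' := by
    have := oneS_mem_unitSet (m := m)
    simpa [oneS, ModS.toW, ModS.ofW] using this
  mul_mem' := by
    intro σ τ hσ hτ
    have h := unit_mul_mem (m := m) (u := eM m σ) (v := eM m τ) hσ hτ
    have hne : eM m σ * eM m τ ≠ 0 := unit_ne_zero h
    rw [eM_mul_of_ne hne] at h
    exact h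
  inv_mem' := by
    intro σ hσ
    obtain ⟨v, hv, h1, h2⟩ := unit_inv_exists (m := m) (u := eM m σ) hσ
    have hvne : v ≠ 0 := unit_ne_zero hv
    obtain ⟨τ, hτ⟩ := (modS_cases v).resolve_left hvne
    subst hτ
    have h1' : eM m σ * eM m τ = eM m (σ * τ) :=
      eM_mul_of_ne (by rw [h1]; exact unit_ne_zero (oneS_mem_unitSet))
    rw [h1', ← eM_one] at h1
    have h3 : σ * τ = 1 := eM_injective h1
    have hτσ : τ = σ⁻¹ := (inv_eq_of_mul_eq_one_right h3).symm
    rw [← hτσ]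
    exact hv

theorem h90 (δ : ModS m → (galZeroModule K L m).carrier)
    (hδ : ∀ u v : ModS m, u.toW ∈ m.unitSet → v.toW ∈ m.unitSet →
      δ (u * v) = (galZeroModule K L m).smul u (δ v) + δ u) :
    ∃ β : (galZeroModule K L m).carrier, ∀ u : ModS m, u.toW ∈ m.unitSet →
      δ u = (galZeroModule K L m).smul u β - β := by
  classical
  letI : MulSemiringAction ↥(uGroup K L m) L :=
    MulSemiringAction.compHom L (uGroup K L m).subtype
  haveI : FaithfulSMul ↥(uGroup K L m) L :=
    ⟨fun {σ τ} h => Subtype.ext (AlgEquiv.ext (fun x => h x))⟩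
  haveI : Finite (L ≃ₐ[K] L) := Finite.of_fintype _
  haveI : Finite ↥(uGroup K L m) := Subtype.finite
  set P := FixedPoints.subfield ↥(uGroup K L m) L with hP
  let b : ↥(uGroup K L m) ≃* (L ≃ₐ[P] L) :=
    @FixedPoints.toAlgAutMulEquiv ↥(uGroup K L m) L _ _ _ _
      ⟨fun {σ τ} h => Subtype.ext (AlgEquiv.ext (fun x => h x))⟩
  have hbapp : ∀ (u : ↥(uGroup K L m)) (x : L), (b u) x = (u : L ≃ₐ[K] L) x :=
    fun u x => rfl
  let δ' : ModS m → Additive Lˣ := δ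
  let f : (L ≃ₐ[P] L) → Lˣ := fun τ =>
    Additive.toMul (δ' (eM m ((b.symm τ : ↥(uGroup K L m)) : L ≃ₐ[K] L)))
  have hcoc : groupCohomology.IsMulCocycle₁ f := by
    intro σ τ
    set u := b.symm σ with hu
    set v := b.symm τ with hv
    have hsmul : b.symm (σ * τ) = u * v := map_mul b.symm σ τ
    have hmem_u : (eM m (u : L ≃ₐ[K] L)).toW ∈ m.unitSet := u.2
    have hmem_v : (eM m (v : L ≃ₐ[K] L)).toW ∈ m.unitSet := v.2
    have hmulmem := unit_mul_mem hmem_u hmem_v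
    have hmule : eM m ((u : L ≃ₐ[K] L)) * eM m ((v : L ≃ₐ[K] L))
        = eM m (((u * v : ↥(uGroup K L m)) : L ≃ₐ[K] L)) :=
      eM_mul_of_ne (unit_ne_zero hmulmem)
    have hstep := hδ _ _ hmem_u hmem_v
    rw [hmule] at hstep
    show Additive.toMul (δ' (eM m ((b.symm (σ * τ) : ↥(uGroup K L m)) : L ≃ₐ[K] L)))
        = σ • f τ * f σ
    refine congrArg Additive.toMul ?_
    rw [hsmul]
    rw [show δ' (eM m (((u * v : ↥(uGroup K L m)) : L ≃ₐ[K] L)))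
      = (galZeroModule K L m).smul (eM m ((u : L ≃ₐ[K] L)))
          (δ (eM m ((v : L ≃ₐ[K] L)))) + δ (eM m ((u : L ≃ₐ[K] L))) from hstep]
    rw [gsmul_eM (u : L ≃ₐ[K] L) (δ (eM m ((v : L ≃ₐ[K] L))))]
    have hact : galU K L (u : L ≃ₐ[K] L) (f τ) = σ • f τ := by
      ext
      show ((u : L ≃ₐ[K] L)) ((f τ : Lˣ) : L) = σ (((f τ : Lˣ)) : L)
      have hσb : σ = b u := by rw [hu, MulEquiv.apply_symm_apply]
      rw [hσb, hbapp]
    rw [← hact]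
    rfl
  obtain ⟨β, hβ⟩ :=
    groupCohomology.isMulCoboundary₁_of_isMulCocycle₁_of_aut_to_units f hcoc
  refine ⟨Additive.ofMul β, ?_⟩
  intro u hu
  have hune : u ≠ 0 := unit_ne_zero hu
  set σ₀ := WithZero.unzero (toW_eq_zero.not.mpr hune) with hσ₀
  have hueq : u = eM m σ₀ := unit_eq_eM hune
  have hσ₀mem : σ₀ ∈ uGroup K L m := by
    show ((σ₀ : WithZero (L ≃ₐ[K] L))) ∈ m.unitSet
    rw [hueq] at hu
    exact hu
  set τ := b ⟨σ₀, hσ₀mem⟩ with hτ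
  have hfτ : f τ = Additive.toMul (δ' u) := by
    have hbb : (b.symm (b ⟨σ₀, hσ₀mem⟩)) = ⟨σ₀, hσ₀mem⟩ := MulEquiv.symm_apply_apply _ _
    show Additive.toMul (δ' (eM m ((b.symm (b ⟨σ₀, hσ₀mem⟩) : ↥(uGroup K L m)) : L ≃ₐ[K] L))) = _
    rw [hbb]
    exact congrArg _ (congrArg δ' hueq.symm)
  have hτβ : τ • β = galU K L σ₀ β := by
    ext
    show τ ((β : Lˣ) : L) = σ₀ ((β : Lˣ) : L)
    rw [hτ, hbapp]
  have hmain := hβ τ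
  rw [hfτ, hτβ] at hmain
  have hmain' : Additive.toMul (δ' u) = galU K L σ₀ β / β := hmain.symm
  have hsm : (galZeroModule K L m).smul u (Additive.ofMul β)
      = Additive.ofMul (galU K L σ₀ β) := gsmul_def hune _
  have hfin : δ' u = Additive.ofMul (galU K L σ₀ β) - Additive.ofMul β := by
    calc δ' u = Additive.ofMul (Additive.toMul (δ' u)) := rfl
      _ = Additive.ofMul (galU K L σ₀ β / β) := by rw [hmain']
      _ = Additive.ofMul (galU K L σ₀ β) - Additive.ofMul β := by
          rw [div_eq_mul_inv]; rfl
  rw [hsm]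
  exact hfin

end H90

/-- Let `L/K` be a finite-dimensional normal extension with
Galois group `G`, `S = G(∗)` a modification, `U` its group of invertible
elements, assumed normal in `S`, `P = L^U`, and `S/U` the quotient semigroup
(presented here by an abstract semigroup-with-zero `Q` together with a
surjection `π` whose fibres are `{0}` and the classes `x∗U`).  `P^×` is a
0-module over `S/U` (presented by an action `ρ` compatible with the Galois
action), and `L^×` is a 0-module over `S`.  Then the sequence
`0 → H²₀(S/U, P^×) →(χ) H²₀(S, L^×) →(ψ) H²(U, L^×)` is exact, where `χ` is
induced by pulling 0-cochains back along `π` and including `P^× ↪ L^×`, and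
`ψ` by restricting 0-cochains to `U`.  Exactness is stated at the level of
cocycles: injectivity of `χ`, and `ker ψ = im χ`. -/
theorem brauer_monoid_exact_sequence
    (K L : Type) [Field K] [Field L] [Algebra K L]
    [FiniteDimensional K L] [Normal K L]
    (m : Modification (L ≃ₐ[K] L))
    -- `U` is normal in `S`:
    (hUnormal : ∀ x : WithZero (L ≃ₐ[K] L),
      {z | ∃ u ∈ m.unitSet, z = m.mul x u} = {z | ∃ u ∈ m.unitSet, z = m.mul u x})
    -- the quotient `S/U`:
    (Q : Type) [SemigroupWithZero Q] (π : ModS m →ₙ* Q)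
    (hπsurj : Function.Surjective π)
    (hπzero : ∀ x : ModS m, π x = 0 ↔ x = 0)
    (hπfib : ∀ x y : ModS m, π x = π y ↔
      ((x = 0 ∧ y = 0) ∨ ∃ u ∈ m.unitSet, ModS.toW y = m.mul (ModS.toW x) u))
    -- `P^×` as a 0-module over `S/U`:
    (ρ : Q → Additive ↥(fixedUnits K L m) → Additive ↥(fixedUnits K L m))
    (hρadd : ∀ q a b, ρ q (a + b) = ρ q a + ρ q b)
    (hρmul : ∀ q r : Q, q * r ≠ 0 → ∀ a, ρ (q * r) a = ρ q (ρ r a))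
    (hρcompat : ∀ (x : ModS m) (h : ModS.toW x ≠ 0)
      (a : Additive ↥(fixedUnits K L m)),
      ((Additive.toMul (ρ (π x) a) : ↥(fixedUnits K L m)) : Lˣ)
        = galU K L (WithZero.unzero h) ((Additive.toMul a : ↥(fixedUnits K L m)) : Lˣ)) :
    -- `χ` is injective:
    (∀ f, f ∈ (mkZeroModule Q (Additive ↥(fixedUnits K L m)) ρ hρadd hρmul).cocycles 2 →
      pullCochain2 K L m π f ∈ (galZeroModule K L m).cobounds 2 →
      f ∈ (mkZeroModule Q (Additive ↥(fixedUnits K L m)) ρ hρadd hρmul).cobounds 2) ∧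
    -- exactness at `H²₀(S, L^×)`: `ψ [g] = 0` iff `[g] ∈ im χ`:
    (∀ g, g ∈ (galZeroModule K L m).cocycles 2 →
      ((∃ h : ModS m → (galZeroModule K L m).carrier, ∀ u v : ModS m,
          ModS.toW u ∈ m.unitSet → ModS.toW v ∈ m.unitSet →
          g ![u, v] = (galZeroModule K L m).smul u (h v) - h (u * v) + h u) ↔
        ∃ f ∈ (mkZeroModule Q (Additive ↥(fixedUnits K L m)) ρ hρadd hρmul).cocycles 2,
          g - pullCochain2 K L m π f ∈ (galZeroModule K L m).cobounds 2)) := by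
  classical
  set MA := galZeroModule K L m with hMA
  set MQ := mkZeroModule Q (Additive ↥(fixedUnits K L m)) ρ hρadd hρmul with hMQ
  -- basic facts about `π` and the semigroup structure
  have hπmul : ∀ x y : ModS m, π (x * y) = π x * π y := map_mul π
  have hπ0 : π (0 : ModS m) = 0 := (hπzero 0).mpr rfl
  have hπne : ∀ {x : ModS m}, x ≠ 0 → π x ≠ 0 :=
    fun {x} hx h0 => hx ((hπzero x).mp h0)
  have hnorm : ∀ (u x : ModS m), u.toW ∈ m.unitSet →
      ∃ w : ModS m, w.toW ∈ m.unitSet ∧ u * x = x * w := by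
    intro u x hu
    have hset := hUnormal x.toW
    have hmem : (u * x).toW ∈ {z | ∃ w ∈ m.unitSet, z = m.mul w x.toW} :=
      ⟨u.toW, hu, rfl⟩
    rw [← hset] at hmem
    obtain ⟨w, hw, heq⟩ := hmem
    exact ⟨ModS.ofW m w, hw, heq⟩
  have hfib' : ∀ x y : ModS m, x ≠ 0 → π x = π y →
      ∃ u : ModS m, u.toW ∈ m.unitSet ∧ y = x * u := by
    intro x y hx hxy
    rcases (hπfib x y).mp hxy with ⟨hx0, _⟩ | ⟨u, hu, heq⟩
    · exact absurd hx0 hx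
    · exact ⟨ModS.ofW m u, hu, heq⟩
  have hclass : ∀ (x u : ModS m), u.toW ∈ m.unitSet → π (x * u) = π x := by
    intro x u hu
    by_cases hx : x = 0
    · rw [hx, zero_mul]
    · symm
      rw [hπfib]
      right
      exact ⟨u.toW, hu, rfl⟩
  have hclass' : ∀ (u x : ModS m), u.toW ∈ m.unitSet → π (u * x) = π x := by
    intro u x hu
    obtain ⟨w, hw, he⟩ := hnorm u x hu
    rw [he, hclass x w hw]
  have hπu1 : ∀ u : ModS m, u.toW ∈ m.unitSet → π u = π (oneS m) := by
    intro u hu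
    have := hclass (oneS m) u hu
    rwa [oneS_mul] at this
  have hone_ne : (oneS m : ModS m) ≠ 0 := unit_ne_zero oneS_mem_unitSet
  have hQ1 : π (oneS m) * π (oneS m) = π (oneS m) := by
    rw [← hπmul, mul_oneS]
  have hQone_l : ∀ q : Q, π (oneS m) * q = q := by
    intro q
    obtain ⟨x, rfl⟩ := hπsurj q
    rw [← hπmul, oneS_mul]
  have hQone_r : ∀ q : Q, q * π (oneS m) = q := by
    intro q
    obtain ⟨x, rfl⟩ := hπsurj q
    rw [← hπmul, mul_oneS]
  -- the section of `π`
  set sec : Q → ModS m := Function.surjInv hπsurj with hsecdef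
  have hsec : ∀ q : Q, π (sec q) = q := fun q => Function.surjInv_eq hπsurj q
  have hsecne : ∀ q : Q, q ≠ 0 → sec q ≠ 0 := by
    intro q hq h0
    exact hq (by rw [← hsec q, h0, hπ0])
  have hsecmul : ∀ q r : Q, q * r ≠ 0 → sec q * sec r ≠ 0 := by
    intro q r hqr h0
    apply hqr
    rw [← hsec q, ← hsec r, ← hπmul, h0, hπ0]
  -- the comparison map between the two coefficient modules
  have jρx : ∀ (x : ModS m) (hx : x ≠ 0) (a : Additive ↥(fixedUnits K L m)),
      jmap K L m (ρ (π x) a) = (galZeroModule K L m).smul x (jmap K L m a) := by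
    intro x hx a
    have hcomp := hρcompat x (toW_eq_zero.not.mpr hx) a
    rw [gsmul_def hx (jmap K L m a)]
    show Additive.ofMul ((Additive.toMul (ρ (π x) a) : ↥(fixedUnits K L m)) : Lˣ) = _
    rw [hcomp]
    rfl
  have jρ : ∀ (q : Q) (hq : q ≠ 0) (a : Additive ↥(fixedUnits K L m)),
      jmap K L m (MQ.smul q a) = (galZeroModule K L m).smul (sec q) (jmap K L m a) := by
    intro q hq a
    have := jρx (sec q) (hsecne q hq) a
    rwa [hsec q] at this
  have hρ1 : ∀ a : Additive ↥(fixedUnits K L m), ρ (π (oneS m)) a = a := by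
    intro a
    apply jmap_injective
    rw [jρx (oneS m) hone_ne a, gsmul_oneS (jmap K L m a)]
  have jρxM : ∀ (x : ModS m) (hx : x ≠ 0) (a : Additive ↥(fixedUnits K L m)),
      jmap K L m (MQ.smul (π x) a) = (galZeroModule K L m).smul x (jmap K L m a) :=
    jρx
  have hpull : ∀ (f : MQ.cochain 2) (x : Fin 2 → ModS m),
      pullCochain2 K L m π f x = jmap K L m (f (fun i => π (x i))) := fun _ _ => rfl
  have hargpair : ∀ x y : ModS m,
      (fun i => π ((![x, y] : Fin 2 → ModS m) i)) = ![π x, π y] := by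
    intro x y
    funext i
    fin_cases i <;> rfl
  constructor
  · -- Part 1 : injectivity of χ
    intro f hf hpb
    have hfc := (MQ.mem_cocycles₂).mp hf
    rw [ZeroModule.mem_cobounds₂] at hpb
    obtain ⟨t, ht⟩ := hpb
    have hw := ZeroModule.mem_vanishing₂ (galZeroModule K L m) |>.mp ht
    set c₀ : MQ.carrier := f ![π (oneS m), π (oneS m)] with hc₀
    -- normalization facts about the cocycle `f`
    have hfl : ∀ q : Q, q ≠ 0 → f ![π (oneS m), q] = c₀ := by
      intro q hq
      have hnz : π (oneS m) * π (oneS m) * q ≠ 0 := by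
        rw [hQ1, hQone_l q]; exact hq
      have hid := hfc (π (oneS m)) (π (oneS m)) q hnz
      rw [hQ1, hQone_l q] at hid
      rw [show MQ.smul (π (oneS m)) (f ![π (oneS m), q]) = f ![π (oneS m), q]
        from hρ1 _] at hid
      have hkey : f ![π (oneS m), q] - c₀ = 0 := by rw [← hid]; abel
      exact sub_eq_zero.mp hkey
    have hfr : ∀ q : Q, q ≠ 0 → f ![q, π (oneS m)] = MQ.smul q c₀ := by
      intro q hq
      have hnz : q * π (oneS m) * π (oneS m) ≠ 0 := by
        rw [hQone_r q, hQone_r q]; exact hq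
      have hid := hfc q (π (oneS m)) (π (oneS m)) hnz
      rw [hQone_r q, hQ1] at hid
      have hkey : MQ.smul q c₀ - f ![q, π (oneS m)] = 0 := by rw [← hid]; abel
      exact (sub_eq_zero.mp hkey).symm
    -- translation of the coboundary relation
    have hpt : ∀ x y : ModS m, x * y ≠ 0 →
        jmap K L m (f ![π x, π y]) = (galZeroModule K L m).cobFun t ![x, y] := by
      intro x y hxy
      have h0 := hw x y hxy
      have h1 : pullCochain2 K L m π f ![x, y]
          - (galZeroModule K L m).cobFun t ![x, y] = 0 := h0
      have h2 : pullCochain2 K L m π f ![x, y] = jmap K L m (f ![π x, π y]) := by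
        rw [hpull f ![x, y], hargpair x y]
      rw [h2] at h1
      exact sub_eq_zero.mp h1
    set T : ModS m → (galZeroModule K L m).carrier := fun x => t ![x] with hTdef
    have hcb : ∀ x y : ModS m, (galZeroModule K L m).cobFun t ![x, y]
        = (galZeroModule K L m).smul x (T y) - T (x * y) + T x :=
      fun x y => (galZeroModule K L m).cobFun_pair t x y
    have hc₀fix : ∀ u : ModS m, u.toW ∈ m.unitSet →
        (galZeroModule K L m).smul u (jmap K L m c₀) = jmap K L m c₀ :=
      fun u hu => gsmul_fixed (toMul_jmap_mem c₀) hu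
    have hα : ∀ u v : ModS m, u.toW ∈ m.unitSet → v.toW ∈ m.unitSet →
        jmap K L m c₀ = (galZeroModule K L m).smul u (T v) - T (u * v) + T u := by
      intro u v hu hv
      have huv : u * v ≠ 0 := mul_unit_ne_zero (unit_ne_zero hu) hv
      have := hpt u v huv
      rw [hπu1 u hu, hπu1 v hv, hfl (π (oneS m)) (hπne hone_ne), hcb] at this
      exact this
    have hT1 : T (oneS m) = jmap K L m c₀ := by
      have := hα (oneS m) (oneS m) oneS_mem_unitSet oneS_mem_unitSet
      rw [gsmul_oneS (T (oneS m)), mul_oneS] at this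
      have hkey : T (oneS m) - jmap K L m c₀ = 0 := by rw [this]; abel
      exact sub_eq_zero.mp hkey
    -- the 1-cocycle on the units, and Hilbert 90
    set sδ : ModS m → (galZeroModule K L m).carrier :=
      fun u => T u - T (oneS m) with hsδ
    have hscoc : ∀ u v : ModS m, u.toW ∈ m.unitSet → v.toW ∈ m.unitSet →
        sδ (u * v) = (galZeroModule K L m).smul u (sδ v) + sδ u := by
      intro u v hu hv
      have hTuv : T (u * v) = (galZeroModule K L m).smul u (T v) + T u
          - jmap K L m c₀ := by
        have hkey : T (u * v) - ((galZeroModule K L m).smul u (T v) + T u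
            - jmap K L m c₀) = 0 := by rw [hα u v hu hv]; abel
        exact sub_eq_zero.mp hkey
      show T (u * v) - T (oneS m)
          = (galZeroModule K L m).smul u (T v - T (oneS m)) + (T u - T (oneS m))
      rw [hTuv, (galZeroModule K L m).smul_sub', hT1, hc₀fix u hu]
      abel
    obtain ⟨β, hβ⟩ := h90 K L m sδ hscoc
    set tbar : ModS m → (galZeroModule K L m).carrier :=
      fun x => T x - (galZeroModule K L m).smul x β + β with htbardef
    have htbar_r : ∀ x u : ModS m, x ≠ 0 → u.toW ∈ m.unitSet →
        tbar (x * u) = tbar x := by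
      intro x u hx hu
      have hxu : x * u ≠ 0 := mul_unit_ne_zero hx hu
      have hTxu : T (x * u) = (galZeroModule K L m).smul (x * u) β
          - (galZeroModule K L m).smul x β + T x := by
        have h1 := hpt x u hxu
        rw [hπu1 u hu, hfr (π x) (hπne hx), hcb] at h1
        rw [jρxM x hx c₀] at h1
        have h2 : T (x * u) = (galZeroModule K L m).smul x (T u)
            - (galZeroModule K L m).smul x (jmap K L m c₀) + T x :=
          eq_of_abel h1 (by abel)
        rw [h2, ← (galZeroModule K L m).smul_sub']
        have h3 : T u - jmap K L m c₀ = sδ u := by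
          show _ = T u - T (oneS m)
          rw [hT1]
        rw [h3, hβ u hu, (galZeroModule K L m).smul_sub',
          ← (galZeroModule K L m).mul_smul x u hxu]
      show T (x * u) - (galZeroModule K L m).smul (x * u) β + β
          = T x - (galZeroModule K L m).smul x β + β
      rw [hTxu]; abel
    have htbar_l : ∀ u x : ModS m, x ≠ 0 → u.toW ∈ m.unitSet →
        tbar (u * x) = (galZeroModule K L m).smul u (tbar x) := by
      intro u x hx hu
      have hux : u * x ≠ 0 := unit_mul_ne_zero hx hu
      have hTux : T (u * x) = (galZeroModule K L m).smul u (T x)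
          + (galZeroModule K L m).smul u β - β := by
        have h1 := hpt u x hux
        rw [hπu1 u hu, hfl (π x) (hπne hx), hcb] at h1
        have h2 : T (u * x) = (galZeroModule K L m).smul u (T x) + T u
            - jmap K L m c₀ := eq_of_abel h1 (by abel)
        have h3 : T u - jmap K L m c₀ = sδ u := by
          show _ = T u - T (oneS m)
          rw [hT1]
        have h4 : T (u * x) = (galZeroModule K L m).smul u (T x) + sδ u := by
          rw [h2, ← h3]; abel
        rw [h4, hβ u hu]; abel
      show T (u * x) - (galZeroModule K L m).smul (u * x) β + β
          = (galZeroModule K L m).smul u (T x - (galZeroModule K L m).smul x β + β)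
      rw [hTux, (galZeroModule K L m).smul_add, (galZeroModule K L m).smul_sub',
        ← (galZeroModule K L m).mul_smul u x hux]
      abel
    have hfixtbar : ∀ x : ModS m, x ≠ 0 → ∀ u : ModS m, u.toW ∈ m.unitSet →
        (galZeroModule K L m).smul u (tbar x) = tbar x := by
      intro x hx u hu
      obtain ⟨w, hwu, hwe⟩ := hnorm u x hu
      rw [← htbar_l u x hx hu, hwe, htbar_r x w hx hwu]
    have hclstbar : ∀ x y : ModS m, x ≠ 0 → π x = π y → tbar y = tbar x := by
      intro x y hx hxy
      obtain ⟨u, hu, rfl⟩ := hfib' x y hx hxy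
      exact htbar_r x u hx hu
    have hcobtbar : ∀ x y : ModS m, x * y ≠ 0 →
        (galZeroModule K L m).smul x (tbar y) - tbar (x * y) + tbar x
          = (galZeroModule K L m).smul x (T y) - T (x * y) + T x := by
      intro x y hxy
      show (galZeroModule K L m).smul x
            (T y - (galZeroModule K L m).smul y β + β)
          - (T (x * y) - (galZeroModule K L m).smul (x * y) β + β)
          + (T x - (galZeroModule K L m).smul x β + β) = _
      rw [(galZeroModule K L m).smul_add, (galZeroModule K L m).smul_sub',
        ← (galZeroModule K L m).mul_smul x y hxy]
      abel
    have hmemtbar : ∀ q : Q, q ≠ 0 →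
        Additive.toMul (tbar (sec q)) ∈ fixedUnits K L m := by
      intro q hq
      exact mem_fixed_of_gsmul (fun u hu => hfixtbar (sec q) (hsecne q hq) u hu)
    set σc : MQ.cochain 1 := fun v =>
      if hv : v 0 ≠ 0 then
        Additive.ofMul (⟨Additive.toMul (tbar (sec (v 0))), hmemtbar _ hv⟩
          : ↥(fixedUnits K L m))
      else 0 with hσcdef
    have jσ : ∀ q : Q, (hq : q ≠ 0) → jmap K L m (σc ![q]) = tbar (sec q) := by
      intro q hq
      rw [show σc ![q] = Additive.ofMul
        (⟨Additive.toMul (tbar (sec q)), hmemtbar q hq⟩ : ↥(fixedUnits K L m))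
        from dif_pos hq]
      rfl
    rw [ZeroModule.mem_cobounds₂]
    refine ⟨σc, ?_⟩
    rw [ZeroModule.mem_vanishing₂]
    intro q r hqr
    have hq : q ≠ 0 := nzt_left hqr
    have hr : r ≠ 0 := nzt_right hqr
    have hsqr : sec q * sec r ≠ 0 := hsecmul q r hqr
    have h1 : f ![q, r] - MQ.cobFun σc ![q, r] = 0 := by
      apply sub_eq_zero.mpr
      apply jmap_injective
      rw [MQ.cobFun_pair σc q r]
      show jmap K L m (f ![q, r]) = jmap K L m (MQ.smul q (σc ![r]))
        - jmap K L m (σc ![q * r]) + jmap K L m (σc ![q])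
      rw [jρ q hq (σc ![r]), jσ r hr, jσ q hq,
        jσ (q * r) hqr]
      have h2 : tbar (sec (q * r)) = tbar (sec q * sec r) :=
        hclstbar (sec q * sec r) (sec (q * r)) hsqr
          (by rw [hπmul, hsec, hsec, hsec])
      rw [h2, hcobtbar (sec q) (sec r) hsqr, ← hcb, ← hpt (sec q) (sec r) hsqr,
        hsec, hsec]
    exact h1
  · -- Part 2 : exactness at `H²₀(S, L^×)`
    intro g hg
    constructor
    · -- ⇒ : if the restriction to `U` is a coboundary then `[g]` is in the image
      rintro ⟨h, hpsi⟩
      -- Step 0 : kill `g` on `U × U`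
      set hh : (galZeroModule K L m).cochain 1 := fun v => h (v 0) with hhdef
      set g₁ : (galZeroModule K L m).cochain 2
        := g - (galZeroModule K L m).cobFun hh with hg₁def
      have hg1c : g₁ ∈ (galZeroModule K L m).cocycles 2 :=
        sub_mem hg ((galZeroModule K L m).cobFun_mem_cocycles hh)
      have hg1 : ∀ u v : ModS m, u.toW ∈ m.unitSet → v.toW ∈ m.unitSet →
          g₁ ![u, v] = 0 := by
        intro u v hu hv
        show g ![u, v] - (galZeroModule K L m).cobFun hh ![u, v] = 0
        rw [(galZeroModule K L m).cobFun_pair]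
        have e1 : hh ![v] = h v := rfl
        have e2 : hh ![u * v] = h (u * v) := rfl
        have e3 : hh ![u] = h u := rfl
        rw [e1, e2, e3, hpsi u v hu hv]
        abel
      have hc1 := ((galZeroModule K L m).mem_cocycles₂).mp hg1c
      -- Step 1 : representatives and the right-normalizing cochain `t1`
      set rep : ModS m → ModS m :=
        fun x => if π x = π (oneS m) then oneS m else sec (π x) with hrepdef
      have hrep_class : ∀ x : ModS m, π (rep x) = π x := by
        intro x
        show π (if π x = π (oneS m) then oneS m else sec (π x)) = π x
        split
        · next hcond => rw [hcond]
        · exact hsec (π x)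
      have hrep_ne : ∀ x : ModS m, x ≠ 0 → rep x ≠ 0 := by
        intro x hx h0
        exact hπne hx (by rw [← hrep_class x, h0, hπ0])
      have hrep_eq : ∀ x y : ModS m, π x = π y → rep x = rep y := by
        intro x y hxy
        show (if π x = π (oneS m) then oneS m else sec (π x)) = _
        rw [hxy]
      have hrep_unit : ∀ u : ModS m, u.toW ∈ m.unitSet → rep u = oneS m := by
        intro u hu
        show (if π u = π (oneS m) then oneS m else sec (π u)) = oneS m
        rw [if_pos (hπu1 u hu)]
      have hdecomp : ∀ x : ModS m, x ≠ 0 →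
          ∃ u : ModS m, u.toW ∈ m.unitSet ∧ x = rep x * u :=
        fun x hx => hfib' (rep x) x (hrep_ne x hx) (hrep_class x)
      set t1 : ModS m → (galZeroModule K L m).carrier := fun x =>
        if hx : x ≠ 0 then g₁ ![rep x, Classical.choose (hdecomp x hx)] else 0
        with ht1def
      have ht1x : ∀ (x : ModS m) (hx : x ≠ 0),
          t1 x = g₁ ![rep x, Classical.choose (hdecomp x hx)] := by
        intro x hx; exact dif_pos hx
      have ht1_unit : ∀ u : ModS m, u.toW ∈ m.unitSet → t1 u = 0 := by
        intro u hu
        have hune : u ≠ 0 := unit_ne_zero hu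
        rw [ht1x u hune]
        exact hg1 _ _ (by rw [hrep_unit u hu]; exact oneS_mem_unitSet)
          (Classical.choose_spec (hdecomp u hune)).1
      have ht1_mul : ∀ x u : ModS m, x ≠ 0 → u.toW ∈ m.unitSet →
          t1 (x * u) = t1 x + g₁ ![x, u] := by
        intro x u hx hu
        have hxu : x * u ≠ 0 := mul_unit_ne_zero hx hu
        obtain ⟨hwu, hwe⟩ := Classical.choose_spec (hdecomp x hx)
        obtain ⟨hwu', hwe'⟩ := Classical.choose_spec (hdecomp (x * u) hxu)
        have hrepeq : rep (x * u) = rep x := hrep_eq _ _ (hclass x u hu)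
        have hcanc : Classical.choose (hdecomp (x * u) hxu)
            = Classical.choose (hdecomp x hx) * u := by
          have hwe'' : x * u = rep x * Classical.choose (hdecomp (x * u) hxu) :=
            hwe'.trans (congrArg
              (fun z => z * Classical.choose (hdecomp (x * u) hxu)) hrepeq)
          apply cancel_unit_right (hrep_ne x hx) hwu' (unit_mul_mem hwu hu)
          rw [← hwe'', ← mul_assoc, ← hwe]
        have hnz : rep x * Classical.choose (hdecomp x hx) * u ≠ 0 := by
          rw [← hwe]; exact hxu
        have hid := hc1 (rep x) (Classical.choose (hdecomp x hx)) u hnz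
        rw [hg1 _ _ hwu hu, (galZeroModule K L m).smul_zero', ← hwe] at hid
        rw [ht1x (x * u) hxu, ht1x x hx, hcanc, hrepeq]
        exact eq_of_abel hid (by abel)
      -- `g₂` : kills all pairs `(x, u)`
      set t1c : (galZeroModule K L m).cochain 1 := fun v => t1 (v 0) with ht1cdef
      set g₂ : (galZeroModule K L m).cochain 2
        := g₁ + (galZeroModule K L m).cobFun t1c with hg₂def
      have hg2c : g₂ ∈ (galZeroModule K L m).cocycles 2 :=
        add_mem hg1c ((galZeroModule K L m).cobFun_mem_cocycles t1c)
      have hg2r : ∀ x u : ModS m, x ≠ 0 → u.toW ∈ m.unitSet → g₂ ![x, u] = 0 := by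
        intro x u hx hu
        show g₁ ![x, u] + (galZeroModule K L m).cobFun t1c ![x, u] = 0
        rw [(galZeroModule K L m).cobFun_pair]
        have e1 : t1c ![u] = t1 u := rfl
        have e2 : t1c ![x * u] = t1 (x * u) := rfl
        have e3 : t1c ![x] = t1 x := rfl
        rw [e1, e2, e3, ht1_unit u hu, (galZeroModule K L m).smul_zero',
          ht1_mul x u hx hu]
        abel
      have hc2 := ((galZeroModule K L m).mem_cocycles₂).mp hg2c
      have hR2 : ∀ x y u : ModS m, x * y ≠ 0 → u.toW ∈ m.unitSet →
          g₂ ![x, y * u] = g₂ ![x, y] := by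
        intro x y u hxy hu
        have hy : y ≠ 0 := nzt_right hxy
        have hnz : x * y * u ≠ 0 := mul_unit_ne_zero hxy hu
        have hid := hc2 x y u hnz
        rw [hg2r y u hy hu, hg2r (x * y) u hxy hu,
          (galZeroModule K L m).smul_zero'] at hid
        exact eq_of_abel hid (by abel)
      have hδc : ∀ y : ModS m, y ≠ 0 → ∀ u v : ModS m, u.toW ∈ m.unitSet →
          v.toW ∈ m.unitSet → g₂ ![u * v, y]
            = (galZeroModule K L m).smul u (g₂ ![v, y]) + g₂ ![u, y] := by
        intro y hy u v hu hv
        have hvy : v * y ≠ 0 := unit_mul_ne_zero hy hv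
        have hnz : u * v * y ≠ 0 := by
          rw [mul_assoc]; exact unit_mul_ne_zero hvy hu
        have hid := hc2 u v y hnz
        obtain ⟨w, hw, hwe⟩ := hnorm v y hv
        have huy : u * y ≠ 0 := unit_mul_ne_zero hy hu
        have hvyw : g₂ ![u, v * y] = g₂ ![u, y] := by
          rw [hwe]; exact hR2 u y w huy hw
        rw [hvyw, hg2r u v (unit_ne_zero hu) hv] at hid
        exact eq_of_abel hid.symm (by abel)
      -- Hilbert 90, class by class
      set Β : Q → (galZeroModule K L m).carrier := fun q =>
        if hq : q ≠ 0 then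
          Classical.choose (h90 K L m (fun u => g₂ ![u, sec q])
            (fun u v hu hv => hδc (sec q) (hsecne q hq) u v hu hv))
        else 0 with hΒdef
      have hΒspec : ∀ (q : Q) (hq : q ≠ 0) (u : ModS m), u.toW ∈ m.unitSet →
          g₂ ![u, sec q] = (galZeroModule K L m).smul u (Β q) - Β q := by
        intro q hq u hu
        have hb : Β q = Classical.choose (h90 K L m (fun u => g₂ ![u, sec q])
            (fun u v hu hv => hδc (sec q) (hsecne q hq) u v hu hv)) := dif_pos hq
        rw [hb]
        exact Classical.choose_spec (h90 K L m (fun u => g₂ ![u, sec q])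
          (fun u v hu hv => hδc (sec q) (hsecne q hq) u v hu hv)) u hu
      set t2 : Q → (galZeroModule K L m).carrier := fun q =>
        if q = 0 ∨ q = π (oneS m) then 0 else Β q with ht2def
      have ht2unit : ∀ u : ModS m, u.toW ∈ m.unitSet → t2 (π u) = 0 := by
        intro u hu
        exact if_pos (Or.inr (hπu1 u hu))
      have ht2a : ∀ y : ModS m, y ≠ 0 → ∀ u : ModS m, u.toW ∈ m.unitSet →
          g₂ ![u, y] = (galZeroModule K L m).smul u (t2 (π y)) - t2 (π y) := by
        intro y hy u hu
        have hsy : sec (π y) ≠ 0 := hsecne _ (hπne hy)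
        have hred : g₂ ![u, y] = g₂ ![u, sec (π y)] := by
          obtain ⟨w, hw, hyw⟩ := hfib' (sec (π y)) y hsy (by rw [hsec])
          calc g₂ ![u, y] = g₂ ![u, sec (π y) * w] := by rw [← hyw]
            _ = g₂ ![u, sec (π y)] :=
              hR2 u (sec (π y)) w (unit_mul_ne_zero hsy hu) hw
        by_cases hq1 : π y = π (oneS m)
        · have ht20 : t2 (π y) = 0 := if_pos (Or.inr hq1)
          rw [ht20, (galZeroModule K L m).smul_zero', hred]
          have hsu : (sec (π y)).toW ∈ m.unitSet := by
            obtain ⟨w, hw, hswe⟩ := hfib' (oneS m) (sec (π y)) hone_ne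
              (by rw [hsec]; exact hq1.symm)
            rw [hswe, oneS_mul]
            exact hw
          rw [hg2r u (sec (π y)) (unit_ne_zero hu) hsu]
          abel
        · have hπy0 : π y ≠ 0 := hπne hy
          have ht2B : t2 (π y) = Β (π y) := if_neg (by push_neg; exact ⟨hπy0, hq1⟩)
          rw [ht2B, hred]
          exact hΒspec (π y) hπy0 u hu
      -- `g₃` : kills all pairs `(x, u)` and `(u, x)`
      set t2c : (galZeroModule K L m).cochain 1 := fun v => t2 (π (v 0)) with ht2cdef
      set g₃ : (galZeroModule K L m).cochain 2
        := g₂ - (galZeroModule K L m).cobFun t2c with hg₃def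
      have hg3c : g₃ ∈ (galZeroModule K L m).cocycles 2 :=
        sub_mem hg2c ((galZeroModule K L m).cobFun_mem_cocycles t2c)
      have hg3r : ∀ x u : ModS m, x ≠ 0 → u.toW ∈ m.unitSet → g₃ ![x, u] = 0 := by
        intro x u hx hu
        show g₂ ![x, u] - (galZeroModule K L m).cobFun t2c ![x, u] = 0
        rw [(galZeroModule K L m).cobFun_pair, hg2r x u hx hu]
        have e1 : t2c ![u] = t2 (π u) := rfl
        have e2 : t2c ![x * u] = t2 (π (x * u)) := rfl
        have e3 : t2c ![x] = t2 (π x) := rfl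
        rw [e1, e2, e3, ht2unit u hu, (galZeroModule K L m).smul_zero',
          hclass x u hu]
        abel
      have hg3l : ∀ u x : ModS m, x ≠ 0 → u.toW ∈ m.unitSet → g₃ ![u, x] = 0 := by
        intro u x hx hu
        show g₂ ![u, x] - (galZeroModule K L m).cobFun t2c ![u, x] = 0
        rw [(galZeroModule K L m).cobFun_pair]
        have e1 : t2c ![x] = t2 (π x) := rfl
        have e2 : t2c ![u * x] = t2 (π (u * x)) := rfl
        have e3 : t2c ![u] = t2 (π u) := rfl
        rw [e1, e2, e3, ht2unit u hu, hclass' u x hu, ht2a x hx u hu]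
        abel
      have hc3 := ((galZeroModule K L m).mem_cocycles₂).mp hg3c
      have hR2₃ : ∀ x y u : ModS m, x * y ≠ 0 → u.toW ∈ m.unitSet →
          g₃ ![x, y * u] = g₃ ![x, y] := by
        intro x y u hxy hu
        have hy : y ≠ 0 := nzt_right hxy
        have hnz : x * y * u ≠ 0 := mul_unit_ne_zero hxy hu
        have hid := hc3 x y u hnz
        rw [hg3r y u hy hu, hg3r (x * y) u hxy hu,
          (galZeroModule K L m).smul_zero'] at hid
        exact eq_of_abel hid (by abel)
      have hswap : ∀ x u y : ModS m, x * u * y ≠ 0 → u.toW ∈ m.unitSet →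
          g₃ ![x * u, y] = g₃ ![x, u * y] := by
        intro x u y hnz hu
        have hx : x ≠ 0 := nzt_left (nzt_left hnz)
        have hy : y ≠ 0 := nzt_right hnz
        have hid := hc3 x u y hnz
        rw [hg3l u y hy hu, hg3r x u hx hu,
          (galZeroModule K L m).smul_zero'] at hid
        exact eq_of_abel hid.symm (by abel)
      have hfix3 : ∀ x y : ModS m, x * y ≠ 0 → ∀ u : ModS m, u.toW ∈ m.unitSet →
          (galZeroModule K L m).smul u (g₃ ![x, y]) = g₃ ![x, y] := by
        intro x y hxy u hu
        have hx : x ≠ 0 := nzt_left hxy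
        have hnz : u * x * y ≠ 0 := by
          rw [mul_assoc]; exact unit_mul_ne_zero hxy hu
        have hid := hc3 u x y hnz
        rw [hg3l u (x * y) hxy hu, hg3l u x hx hu] at hid
        have hstep : g₃ ![u * x, y] = g₃ ![x, y] := by
          obtain ⟨w, hw, hwe⟩ := hnorm u x hu
          obtain ⟨w', hw', hwe'⟩ := hnorm w y hw
          have hnz2 : x * w * y ≠ 0 := by rw [← hwe]; exact hnz
          rw [hwe, hswap x w y hnz2 hw, hwe']
          exact hR2₃ x y w' hxy hw'
        rw [hstep] at hid
        exact eq_of_abel hid (by abel)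
      have hcls : ∀ x y x' y' : ModS m, x * y ≠ 0 → π x = π x' → π y = π y' →
          (x' * y' ≠ 0 ∧ g₃ ![x', y'] = g₃ ![x, y]) := by
        intro x y x' y' hxy hπx hπy
        have hx : x ≠ 0 := nzt_left hxy
        have hy : y ≠ 0 := nzt_right hxy
        obtain ⟨u, hu, rfl⟩ := hfib' x x' hx hπx
        obtain ⟨v, hv, rfl⟩ := hfib' y y' hy hπy
        obtain ⟨w, hw, hwe⟩ := hnorm u y hu
        have h1 : x * u * y ≠ 0 := by
          rw [mul_assoc, hwe, ← mul_assoc]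
          exact mul_unit_ne_zero hxy hw
        have h2 : x * u * (y * v) ≠ 0 := by
          rw [← mul_assoc]
          exact mul_unit_ne_zero h1 hv
        refine ⟨h2, ?_⟩
        rw [hR2₃ (x * u) y v h1 hv, hswap x u y h1 hu, hwe]
        exact hR2₃ x y w hxy hw
      -- the induced cocycle on `Q`
      have hfixmem : ∀ (q r : Q), q * r ≠ 0 →
          Additive.toMul (g₃ ![sec q, sec r]) ∈ fixedUnits K L m := by
        intro q r hqr
        exact mem_fixed_of_gsmul
          (fun u hu => hfix3 (sec q) (sec r) (hsecmul q r hqr) u hu)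
      set fQ : MQ.cochain 2 := fun v =>
        if hv : v 0 * v 1 ≠ 0 then
          Additive.ofMul (⟨Additive.toMul (g₃ ![sec (v 0), sec (v 1)]),
            hfixmem (v 0) (v 1) hv⟩ : ↥(fixedUnits K L m))
        else 0 with hfQdef
      have jf : ∀ (q r : Q), q * r ≠ 0 →
          jmap K L m (fQ ![q, r]) = g₃ ![sec q, sec r] := by
        intro q r hqr
        have hval : fQ ![q, r] = Additive.ofMul
            (⟨Additive.toMul (g₃ ![sec q, sec r]), hfixmem q r hqr⟩
              : ↥(fixedUnits K L m)) := dif_pos hqr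
        rw [hval]
        rfl
      have hfQcoc : fQ ∈ MQ.cocycles 2 := by
        rw [MQ.mem_cocycles₂]
        intro q r s hqrs
        have hq : q ≠ 0 := nzt_left (nzt_left hqrs)
        have hqr : q * r ≠ 0 := nzt_left hqrs
        have hrs : r * s ≠ 0 := nzt_right (show q * (r * s) ≠ 0 by
          rwa [mul_assoc] at hqrs)
        have hq_rs : q * (r * s) ≠ 0 := by rwa [mul_assoc] at hqrs
        have hne3 : sec q * sec r * sec s ≠ 0 := by
          intro h0
          apply hqrs
          rw [← hsec q, ← hsec r, ← hsec s, ← hπmul, ← hπmul, h0, hπ0]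
        have hne2 : sec q * sec r ≠ 0 := nzt_left hne3
        have hne2' : sec q * (sec r * sec s) ≠ 0 := by
          rw [← mul_assoc]; exact hne3
        have jmap_subM : ∀ a b : MQ.carrier,
            jmap K L m (a - b) = jmap K L m a - jmap K L m b := fun _ _ => rfl
        have jmap_addM : ∀ a b : MQ.carrier,
            jmap K L m (a + b) = jmap K L m a + jmap K L m b := fun _ _ => rfl
        have jmap_zeroM : jmap K L m (0 : MQ.carrier) = 0 := rfl
        apply jmap_injective
        simp only [jmap_subM, jmap_addM, jmap_zeroM]
        rw [jρ q hq (fQ ![r, s]), jf r s hrs, jf q r hqr, jf (q * r) s hqrs,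
          jf q (r * s) hq_rs]
        have e1 : g₃ ![sec (q * r), sec s] = g₃ ![sec q * sec r, sec s] :=
          (hcls (sec q * sec r) (sec s) (sec (q * r)) (sec s) hne3
            (by rw [hπmul, hsec, hsec, hsec]) rfl).2
        have e2 : g₃ ![sec q, sec (r * s)] = g₃ ![sec q, sec r * sec s] :=
          (hcls (sec q) (sec r * sec s) (sec q) (sec (r * s)) hne2' rfl
            (by rw [hπmul, hsec, hsec, hsec])).2
        rw [e1, e2]
        exact hc3 (sec q) (sec r) (sec s) hne3
      refine ⟨fQ, hfQcoc, ?_⟩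
      rw [ZeroModule.mem_cobounds₂]
      refine ⟨hh - t1c + t2c, ?_⟩
      rw [ZeroModule.mem_vanishing₂]
      intro x y hxy
      have hcobT : (galZeroModule K L m).cobFun (hh - t1c + t2c)
          = (galZeroModule K L m).cobFun hh - (galZeroModule K L m).cobFun t1c
            + (galZeroModule K L m).cobFun t2c := by
        show ((galZeroModule K L m).cob 1) (hh - t1c + t2c) = _
        rw [map_add, map_sub]
        rfl
      have hπxy : π x * π y ≠ 0 := by
        rw [← hπmul]
        exact hπne hxy
      have hpf : pullCochain2 K L m π fQ ![x, y] = g₃ ![x, y] := by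
        rw [hpull fQ ![x, y], hargpair x y, jf (π x) (π y) hπxy]
        exact (hcls x y (sec (π x)) (sec (π y)) hxy (hsec (π x)).symm
          ((hsec (π y)).symm)).2
      show g ![x, y] - pullCochain2 K L m π fQ ![x, y]
          - (galZeroModule K L m).cobFun (hh - t1c + t2c) ![x, y] = 0
      rw [hcobT, hpf]
      have hRexp : g₃ ![x, y] = g ![x, y]
          - (galZeroModule K L m).cobFun hh ![x, y]
          + (galZeroModule K L m).cobFun t1c ![x, y]
          - (galZeroModule K L m).cobFun t2c ![x, y] := rfl
      rw [hRexp]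
      show g ![x, y] - _ - ((galZeroModule K L m).cobFun hh ![x, y]
          - (galZeroModule K L m).cobFun t1c ![x, y]
          + (galZeroModule K L m).cobFun t2c ![x, y]) = 0
      abel
    · -- ⇐ : anything in the image of `χ` restricts trivially to `U`
      rintro ⟨f, hf, hgf⟩
      rw [ZeroModule.mem_cobounds₂] at hgf
      obtain ⟨t, ht⟩ := hgf
      have hw2 := ((galZeroModule K L m).mem_vanishing₂).mp ht
      refine ⟨fun x => t ![x] + jmap K L m (f ![π (oneS m), π (oneS m)]), ?_⟩
      intro u v hu hv
      have hune : u ≠ 0 := unit_ne_zero hu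
      have huv : u * v ≠ 0 := mul_unit_ne_zero hune hv
      have h0 : g ![u, v] - pullCochain2 K L m π f ![u, v]
          - (galZeroModule K L m).cobFun t ![u, v] = 0 := hw2 u v huv
      have h1 : g ![u, v] = pullCochain2 K L m π f ![u, v]
          + (galZeroModule K L m).cobFun t ![u, v] := eq_of_abel h0 (by abel)
      have h2 : pullCochain2 K L m π f ![u, v]
          = jmap K L m (f ![π (oneS m), π (oneS m)]) := by
        rw [hpull f ![u, v], hargpair u v, hπu1 u hu, hπu1 v hv]
      rw [h1, h2, (galZeroModule K L m).cobFun_pair,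
        (galZeroModule K L m).smul_add,
        gsmul_fixed (toMul_jmap_mem (f ![π (oneS m), π (oneS m)])) hu]
      exact (fun (J S A B : (galZeroModule K L m).carrier) =>
        (by abel : J + (S - A + B) = S + J - (A + J) + (B + J))) _ _ _ _
end

section
/- If W is a root of a semigroup S, then for every S-module A the restriction homomorphism θ^n_W : H^n(S,A) → H^n(S,W,A) is an isomorphism for n = 0 and n = 1, and is injective for n = 2. -/
/-! ### Partial cohomology with respect to a root -/

/-- The product `x i * x (i+1) * ⋯ * x j` of a segment of a tuple. -/
def mseg {S : Type} [Semigroup S] {n : ℕ} (x : Fin n → S) (i j : Fin n) : S :=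
  (((List.ofFn x).drop ((i : ℕ) + 1)).take ((j : ℕ) - (i : ℕ))).foldl (· * ·) (x i)

/-- `x ∈ W_n`: every segment product `x_i x_{i+1} ⋯ x_j` belongs to `W`. -/
def Wtuple {S : Type} [Semigroup S] (W : Set S) {n : ℕ} (x : Fin n → S) : Prop :=
  ∀ i j : Fin n, i ≤ j → mseg x i j ∈ W

namespace SgModule

variable {S : Type} [Semigroup S] (M : SgModule S) (W : Set S)

/-- Cochains vanishing on `W_n` (total representatives of the zero partial
cochain). -/
def pVanishing (n : ℕ) : AddSubgroup (M.cochain n) where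
  carrier := {f | ∀ x : Fin n → S, Wtuple W x → f x = 0}
  add_mem' := by
    intro f g hf hg x hx
    simp only [Pi.add_apply, hf x hx, hg x hx, add_zero]
  zero_mem' := fun x _ => rfl
  neg_mem' := by
    intro f hf x hx
    simp only [Pi.neg_apply, hf x hx, neg_zero]

/-- Partial cocycles: total cochains whose coboundary vanishes on `W_{n+1}`. -/
def pCocycles (n : ℕ) : AddSubgroup (M.cochain n) :=
  (M.pVanishing W (n + 1)).comap (M.cob n)

/-- Partial coboundaries: total cochains agreeing with a coboundary on
`W_{n+1}`. -/
def pCobounds : (n : ℕ) → AddSubgroup (M.cochain n)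
  | 0 => M.pVanishing W 0
  | n + 1 => (M.cob n).range ⊔ M.pVanishing W (n + 1)

/-- The partial (`W`-) cohomology groups `Hⁿ(S, W, M)`. -/
def pCohomology (n : ℕ) : Type :=
  M.pCocycles W n ⧸ (M.pCobounds W n).addSubgroupOf (M.pCocycles W n)

noncomputable instance (n : ℕ) : AddCommGroup (M.pCohomology W n) := by
  unfold pCohomology; infer_instance

lemma cocycles_le_pCocycles (n : ℕ) : M.cocycles n ≤ M.pCocycles W n := by
  intro f hf
  have h0 : M.cob n f = 0 := hf
  intro x _
  rw [h0]
  rfl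

lemma cobounds_le_pCobounds (n : ℕ) : M.cobounds n ≤ M.pCobounds W n := by
  cases n with
  | zero => exact bot_le
  | succ n => exact le_sup_left

/-- The homomorphism `θⁿ_W : Hⁿ(S, M) → Hⁿ(S, W, M)` induced by restricting
total cochains to partial ones. -/
noncomputable def theta (n : ℕ) : M.cohomology n →+ M.pCohomology W n :=
  QuotientAddGroup.map _ _
    (AddSubgroup.inclusion (M.cocycles_le_pCocycles W n))
    (by
      intro f hf
      have h1 : (f : M.cochain n) ∈ M.cobounds n :=
        (AddSubgroup.mem_addSubgroupOf).mp hf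
      exact (AddSubgroup.mem_addSubgroupOf).mpr (M.cobounds_le_pCobounds W n h1))

end SgModule

/-- `W` is a root of `S`: `W` generates `S`, and `S` is presented by the
generators `W` subject only to relations of the form `x y = z` with
`x, y, z ∈ W` (holding in `S`). -/
def IsRoot {S : Type} [Semigroup S] (W : Set S) : Prop :=
  Function.Surjective (FreeSemigroup.lift ((↑) : W → S)) ∧
    ∀ p q : FreeSemigroup W,
      FreeSemigroup.lift ((↑) : W → S) p = FreeSemigroup.lift ((↑) : W → S) q ↔
        conGen (fun a b : FreeSemigroup W => ∃ x y z : W,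
          (x : S) * y = z ∧ a = FreeSemigroup.of x * FreeSemigroup.of y ∧
            b = FreeSemigroup.of z) p q

/-! ### Auxiliary lemmas for the proof -/

namespace RootAux

open SgModule

set_option linter.unusedSectionVars false

variable {S : Type} [Semigroup S] (M : SgModule S)

lemma smul_zero' (s : S) : M.smul s 0 = 0 := by
  have h := M.smul_add s 0 0
  rw [add_zero] at h
  exact left_eq_add.mp h

lemma smul_neg' (s : S) (a : M.carrier) : M.smul s (-a) = - M.smul s a := by
  have h := M.smul_add s a (-a)
  rw [add_neg_cancel, smul_zero'] at h
  exact (neg_eq_of_add_eq_zero_right h.symm).symm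

lemma smul_sub' (s : S) (a b : M.carrier) :
    M.smul s (a - b) = M.smul s a - M.smul s b := by
  rw [sub_eq_add_neg, M.smul_add, smul_neg', sub_eq_add_neg]

lemma tup1_eq (x : Fin 1 → S) : x = fun _ => x 0 := by
  funext i
  have : i = 0 := Subsingleton.elim _ _
  rw [this]

lemma tup0_eq (x y : Fin 0 → S) : x = y := by
  funext i; exact i.elim0

lemma cob0_apply (f : M.cochain 0) (x : Fin 1 → S) :
    M.cob 0 f x = M.smul (x 0) (f finZeroElim) - f finZeroElim := by
  show M.cobFun f x = _
  unfold SgModule.cobFun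
  rw [tup0_eq (Fin.tail x) finZeroElim, tup0_eq (Fin.init x) finZeroElim]
  simp [altSign, sub_eq_add_neg]

lemma cob1_apply (f : M.cochain 1) (x : Fin 2 → S) :
    M.cob 1 f x = M.smul (x 0) (f fun _ => x 1) - f (fun _ => x 0 * x 1)
      + f (fun _ => x 0) := by
  show M.cobFun f x = _
  unfold SgModule.cobFun
  have h1 : Fin.tail x = fun _ => x 1 := by
    funext i; rw [tup1_eq (Fin.tail x)]; rfl
  have h2 : mulContract x 0 = fun _ => x 0 * x 1 := by
    funext i
    rw [tup1_eq (mulContract x 0)]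
    simp [mulContract]
  have h3 : Fin.init x = fun _ => x 0 := by
    funext i; rw [tup1_eq (Fin.init x)]; rfl
  rw [Fin.sum_univ_one, h1, h2, h3]
  simp [altSign, sub_eq_add_neg]

lemma cob2_apply (f : M.cochain 2) (x : Fin 3 → S) :
    M.cob 2 f x = M.smul (x 0) (f ![x 1, x 2]) - f ![x 0 * x 1, x 2]
      + f ![x 0, x 1 * x 2] - f ![x 0, x 1] := by
  show M.cobFun f x = _
  unfold SgModule.cobFun
  have h1 : Fin.tail x = ![x 1, x 2] := by
    funext i; fin_cases i <;> rfl
  have h2 : mulContract x 0 = ![x 0 * x 1, x 2] := by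
    funext i; fin_cases i <;> simp [mulContract]
  have h3 : mulContract x 1 = ![x 0, x 1 * x 2] := by
    funext i; fin_cases i <;> simp [mulContract]
  have h4 : Fin.init x = ![x 0, x 1] := by
    funext i; fin_cases i <;> rfl
  rw [Fin.sum_univ_two, h1, h2, h3, h4]
  simp only [altSign, Fin.val_zero, Fin.val_one, Nat.reduceAdd, if_neg (by decide : ¬ Even 1),
    if_pos (by decide : Even 2), if_neg (by decide : ¬ Even 3)]
  abel

lemma wtuple0 (W : Set S) (x : Fin 0 → S) : Wtuple W x := fun i => i.elim0

lemma mseg_self {n : ℕ} (x : Fin n → S) (i : Fin n) : mseg x i i = x i := by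
  unfold mseg
  rw [Nat.sub_self, List.take_zero, List.foldl_nil]

lemma wtuple1 (W : Set S) (x : Fin 1 → S) : Wtuple W x ↔ x 0 ∈ W := by
  constructor
  · intro h
    have := h 0 0 le_rfl
    rwa [mseg_self] at this
  · intro h i j hij
    have hi : i = 0 := Subsingleton.elim _ _
    have hj : j = 0 := Subsingleton.elim _ _
    rw [hi, hj, mseg_self]
    exact h

lemma mseg01 (x : Fin 2 → S) : mseg x 0 1 = x 0 * x 1 := by
  unfold mseg
  simp [List.ofFn_succ]

lemma wtuple2 (W : Set S) (x : Fin 2 → S) :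
    Wtuple W x ↔ x 0 ∈ W ∧ x 1 ∈ W ∧ x 0 * x 1 ∈ W := by
  constructor
  · intro h
    refine ⟨?_, ?_, ?_⟩
    · have := h 0 0 le_rfl; rwa [mseg_self] at this
    · have := h 1 1 le_rfl; rwa [mseg_self] at this
    · have := h 0 1 (by decide); rwa [mseg01] at this
  · rintro ⟨h0, h1, h01⟩ i j hij
    fin_cases i <;> fin_cases j
    · show mseg x 0 0 ∈ W; rw [mseg_self]; exact h0
    · show mseg x 0 1 ∈ W; rw [mseg01]; exact h01
    · exact absurd hij (by decide)
    · show mseg x 1 1 ∈ W; rw [mseg_self]; exact h1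

lemma root_ind {W : Set S} (hW : IsRoot W) (P : S → Prop)
    (h1 : ∀ w ∈ W, P w) (h2 : ∀ s t, P s → P t → P (s * t)) : ∀ s, P s := by
  intro s
  obtain ⟨p, rfl⟩ := hW.1 s
  induction p using FreeSemigroup.recOnMul with
  | ih1 w => rw [FreeSemigroup.lift_of]; exact h1 w w.2
  | ih2 w q hw hq => rw [map_mul]; exact h2 _ _ hw hq

/-- The extension semigroup structure on `S × M.carrier` twisted by a
2-cocycle `F`. -/
lemma root_extend {W : Set S} (hW : IsRoot W) (F : S → S → M.carrier)
    (hF : ∀ a b c : S, F a b + F (a * b) c = M.smul a (F b c) + F a (b * c))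
    (g : W → M.carrier)
    (hg : ∀ x y z : W, (x : S) * (y : S) = (z : S) →
      g z = M.smul (x : S) (g y) + g x - F x y) :
    ∃ G : S → M.carrier, (∀ w : W, G (w : S) = g w) ∧
      ∀ s t : S, G (s * t) = M.smul s (G t) + G s - F s t := by
  letI : Semigroup (S × M.carrier) :=
    { mul := fun p q => (p.1 * q.1, M.smul p.1 q.2 + p.2 - F p.1 q.1)
      mul_assoc := by
        rintro ⟨a, u⟩ ⟨b, v⟩ ⟨c, w⟩
        refine Prod.ext (mul_assoc a b c) ?_
        show M.smul (a * b) w + (M.smul a v + u - F a b) - F (a * b) c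
          = M.smul a (M.smul b w + v - F b c) + u - F a (b * c)
        rw [M.mul_smul, smul_sub' M, M.smul_add]
        have h := hF a b c
        rw [← sub_eq_zero]
        rw [show M.smul a (M.smul b w) + (M.smul a v + u - F a b) - F (a * b) c -
          (M.smul a (M.smul b w) + M.smul a v - M.smul a (F b c) + u - F a (b * c))
          = (M.smul a (F b c) + F a (b * c)) - (F a b + F (a * b) c) from by abel, h]
        exact sub_self _ }
  have hmul : ∀ p q : S × M.carrier,
      p * q = (p.1 * q.1, M.smul p.1 q.2 + p.2 - F p.1 q.1) := fun _ _ => rfl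
  set h : FreeSemigroup W →ₙ* S × M.carrier :=
    FreeSemigroup.lift (fun w : W => ((w : S), g w)) with hh
  have hfst : ∀ p : FreeSemigroup W, (h p).1 = FreeSemigroup.lift ((↑) : W → S) p := by
    intro p
    induction p using FreeSemigroup.recOnMul with
    | ih1 w => rw [hh, FreeSemigroup.lift_of, FreeSemigroup.lift_of]
    | ih2 w q hw hq =>
        rw [map_mul, map_mul, hmul]
        show (h (FreeSemigroup.of w)).1 * (h q).1 = _
        rw [hw, hq]
  have hker : ∀ p q : FreeSemigroup W,
      FreeSemigroup.lift ((↑) : W → S) p = FreeSemigroup.lift ((↑) : W → S) q →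
        h p = h q := by
    intro p q hpq
    have hc := (hW.2 p q).mp hpq
    have hle : conGen (fun a b : FreeSemigroup W => ∃ x y z : W,
        (x : S) * y = z ∧ a = FreeSemigroup.of x * FreeSemigroup.of y ∧
          b = FreeSemigroup.of z) ≤ Con.ker h := by
      apply Con.conGen_le.mpr
      rintro a b ⟨x, y, z, hxyz, rfl, rfl⟩
      show h _ = h _
      rw [map_mul, hh, FreeSemigroup.lift_of, FreeSemigroup.lift_of,
        FreeSemigroup.lift_of, hmul]
      refine Prod.ext hxyz ?_
      exact (hg x y z hxyz).symm
    exact hle hc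
  refine ⟨fun s => (h (Function.surjInv hW.1 s)).2, ?_, ?_⟩
  · intro w
    have h1 : h (Function.surjInv hW.1 (w : S)) = h (FreeSemigroup.of w) := by
      apply hker
      rw [Function.surjInv_eq hW.1, FreeSemigroup.lift_of]
    show (h (Function.surjInv hW.1 (w : S))).2 = g w
    rw [h1, hh, FreeSemigroup.lift_of]
  · intro s t
    have h1 : h (Function.surjInv hW.1 (s * t)) =
        h (Function.surjInv hW.1 s * Function.surjInv hW.1 t) := by
      apply hker
      rw [Function.surjInv_eq hW.1, map_mul, Function.surjInv_eq hW.1,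
        Function.surjInv_eq hW.1]
    show (h (Function.surjInv hW.1 (s * t))).2 = _
    rw [h1, map_mul]
    show M.smul (h (Function.surjInv hW.1 s)).1 (h (Function.surjInv hW.1 t)).2
        + (h (Function.surjInv hW.1 s)).2
        - F (h (Function.surjInv hW.1 s)).1 (h (Function.surjInv hW.1 t)).1 = _
    rw [hfst, hfst, Function.surjInv_eq hW.1, Function.surjInv_eq hW.1]

lemma tup2_eq (x : Fin 2 → S) : x = ![x 0, x 1] := by
  funext i; fin_cases i <;> rfl

/-- Reduction of injectivity of `theta` to a statement about cochains. -/
lemma theta_injective (W : Set S) (n : ℕ)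
    (h : ∀ f : M.cochain n, f ∈ M.cocycles n → f ∈ M.pCobounds W n →
      f ∈ M.cobounds n) :
    Function.Injective (M.theta W n) := by
  rw [injective_iff_map_eq_zero]
  intro a ha
  have key : ∀ b : M.cocycles n ⧸ (M.cobounds n).addSubgroupOf (M.cocycles n),
      M.theta W n b = 0 → b = 0 := by
    intro b hb
    induction b using QuotientAddGroup.induction_on with
    | H f =>
      have hb2 : ((AddSubgroup.inclusion (M.cocycles_le_pCocycles W n) f :
          M.pCocycles W n) : M.pCocycles W n ⧸
            (M.pCobounds W n).addSubgroupOf (M.pCocycles W n)) = 0 := hb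
      rw [QuotientAddGroup.eq_zero_iff, AddSubgroup.mem_addSubgroupOf,
        AddSubgroup.coe_inclusion] at hb2
      rw [QuotientAddGroup.eq_zero_iff, AddSubgroup.mem_addSubgroupOf]
      exact h f f.2 hb2
  exact key a ha

/-- Reduction of surjectivity of `theta` to a statement about cochains. -/
lemma theta_surjective (W : Set S) (n : ℕ)
    (h : ∀ f : M.cochain n, f ∈ M.pCocycles W n →
      ∃ f' : M.cochain n, f' ∈ M.cocycles n ∧ -f' + f ∈ M.pCobounds W n) :
    Function.Surjective (M.theta W n) := by
  have key : ∀ y : M.pCocycles W n ⧸ (M.pCobounds W n).addSubgroupOf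
      (M.pCocycles W n), ∃ x, M.theta W n x = y := by
    intro y
    induction y using QuotientAddGroup.induction_on with
    | H f =>
      obtain ⟨f', hf', hd⟩ := h f f.2
      refine ⟨QuotientAddGroup.mk ⟨f', hf'⟩, ?_⟩
      show ((AddSubgroup.inclusion (M.cocycles_le_pCocycles W n) ⟨f', hf'⟩ :
          M.pCocycles W n) : M.pCocycles W n ⧸
            (M.pCobounds W n).addSubgroupOf (M.pCocycles W n)) = ↑f
      rw [QuotientAddGroup.eq, AddSubgroup.mem_addSubgroupOf]
      exact hd
  exact key

variable {W : Set S}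

lemma inj0 (f : M.cochain 0) (_hc : f ∈ M.cocycles 0)
    (hb : f ∈ M.pCobounds W 0) : f ∈ M.cobounds 0 := by
  have hb' : ∀ x : Fin 0 → S, Wtuple W x → f x = 0 := hb
  have h : f = 0 := funext fun x => hb' x (wtuple0 W x)
  rw [h]
  exact AddSubgroup.zero_mem _

lemma surj0 (hW : IsRoot W) (f : M.cochain 0) (hf : f ∈ M.pCocycles W 0) :
    ∃ f' : M.cochain 0, f' ∈ M.cocycles 0 ∧ -f' + f ∈ M.pCobounds W 0 := by
  have hf' : ∀ x : Fin 1 → S, Wtuple W x → M.cob 0 f x = 0 := hf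
  refine ⟨f, ?_, by rw [neg_add_cancel]; exact AddSubgroup.zero_mem _⟩
  show M.cob 0 f = 0
  have hinv : ∀ s : S, M.smul s (f finZeroElim) = f finZeroElim := by
    apply root_ind hW
    · intro w hw
      have h1 := hf' (fun _ => w) ((wtuple1 W _).mpr hw)
      rw [cob0_apply] at h1
      exact sub_eq_zero.mp h1
    · intro s t hs ht
      rw [M.mul_smul, ht, hs]
  funext x
  rw [cob0_apply, hinv, sub_self]
  rfl

lemma cocycle1_eq (f : M.cochain 1) (hc : f ∈ M.cocycles 1) (s t : S) :
    f (fun _ => s * t) = M.smul s (f fun _ => t) + f (fun _ => s) := by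
  have h0 : M.cob 1 f = 0 := hc
  have h1 := congrFun h0 ![s, t]
  rw [cob1_apply] at h1
  simp only [Matrix.cons_val_zero, Matrix.cons_val_one, Matrix.head_cons] at h1
  have h2 : (0 : M.cochain 2) ![s, t] = 0 := rfl
  rw [h2] at h1
  have h3 := sub_eq_zero.mp (by rw [← h1]; abel :
    (M.smul s (f fun _ => t) + f fun _ => s) - f (fun _ => s * t) = 0)
  exact h3.symm

lemma inj1 (hW : IsRoot W) (f : M.cochain 1) (hc : f ∈ M.cocycles 1)
    (hb : f ∈ M.pCobounds W 1) : f ∈ M.cobounds 1 := by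
  have hb' : f ∈ (M.cob 0).range ⊔ M.pVanishing W 1 := hb
  rw [AddSubgroup.mem_sup] at hb'
  obtain ⟨u, hu, z, hz, huz⟩ := hb'
  obtain ⟨a, ha⟩ := hu
  have hz' : ∀ x : Fin 1 → S, Wtuple W x → z x = 0 := hz
  have key : ∀ s : S, f (fun _ => s) = M.smul s (a finZeroElim) - a finZeroElim := by
    apply root_ind hW
    · intro w hw
      have h1 : f (fun _ => w) = u (fun _ => w) + z (fun _ => w) := by
        rw [← congrFun huz (fun _ => w)]; rfl
      rw [h1, hz' _ ((wtuple1 W _).mpr hw), add_zero, ← ha, cob0_apply]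
    · intro s t hs ht
      rw [cocycle1_eq M f hc, hs, ht, M.mul_smul, smul_sub' M]
      abel
  show f ∈ (M.cob 0).range
  refine ⟨fun _ => a finZeroElim, ?_⟩
  funext x
  rw [cob0_apply, tup1_eq x, key (x 0)]

lemma surj1 (hW : IsRoot W) (f : M.cochain 1) (hf : f ∈ M.pCocycles W 1) :
    ∃ f' : M.cochain 1, f' ∈ M.cocycles 1 ∧ -f' + f ∈ M.pCobounds W 1 := by
  have hf' : ∀ x : Fin 2 → S, Wtuple W x → M.cob 1 f x = 0 := hf
  obtain ⟨G, hG1, hG2⟩ := root_extend M hW (fun _ _ => (0 : M.carrier))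
    (by
      intro a b c
      show (0 : M.carrier) + 0 = M.smul a 0 + 0
      rw [smul_zero', add_zero])
    (fun w => f (fun _ => (w : S)))
    (by
      intro x y z hxyz
      have hw : Wtuple W ![(x : S), (y : S)] := by
        rw [wtuple2]
        refine ⟨x.2, y.2, ?_⟩
        simp only [Matrix.cons_val_zero, Matrix.cons_val_one, Matrix.head_cons]
        rw [hxyz]; exact z.2
      have h1 := hf' _ hw
      rw [cob1_apply] at h1
      simp only [Matrix.cons_val_zero, Matrix.cons_val_one, Matrix.head_cons] at h1
      rw [hxyz] at h1
      show f (fun _ => (z : S)) =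
        M.smul (x : S) (f fun _ => (y : S)) + (f fun _ => (x : S)) - 0
      rw [sub_zero]
      have h3 := sub_eq_zero.mp (by rw [← h1]; abel :
        (M.smul (x : S) (f fun _ => (y : S)) + f fun _ => (x : S)) -
          f (fun _ => (z : S)) = 0)
      exact h3.symm)
  have hG2' : ∀ s t : S, G (s * t) = M.smul s (G t) + G s - 0 := hG2
  have hG1' : ∀ w : W, G (w : S) = f (fun _ => (w : S)) := hG1
  refine ⟨fun x => G (x 0), ?_, ?_⟩
  · show M.cob 1 (fun x => G (x 0)) = 0
    funext x
    rw [cob1_apply]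
    show M.smul (x 0) (G (x 1)) - G (x 0 * x 1) + G (x 0) = 0
    rw [hG2', sub_zero]
    abel
  · show _ ∈ (M.cob 0).range ⊔ M.pVanishing W 1
    apply AddSubgroup.mem_sup_right
    intro x hx
    have hx0 : x 0 ∈ W := (wtuple1 W x).mp hx
    show -G (x 0) + f x = 0
    have h4 : G (x 0) = f (fun _ => x 0) := hG1' ⟨x 0, hx0⟩
    rw [h4, tup1_eq x, neg_add_cancel]

lemma inj2 (hW : IsRoot W) (f : M.cochain 2) (hc : f ∈ M.cocycles 2)
    (hb : f ∈ M.pCobounds W 2) : f ∈ M.cobounds 2 := by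
  have hb' : f ∈ (M.cob 1).range ⊔ M.pVanishing W 2 := hb
  rw [AddSubgroup.mem_sup] at hb'
  obtain ⟨u, hu, z, hz, huz⟩ := hb'
  obtain ⟨g, hg⟩ := hu
  have hz' : ∀ x : Fin 2 → S, Wtuple W x → z x = 0 := hz
  have hcoc : ∀ a b c : S, f ![a, b] + f ![a * b, c] =
      M.smul a (f ![b, c]) + f ![a, b * c] := by
    intro a b c
    have h0 : M.cob 2 f = 0 := hc
    have h1 := congrFun h0 ![a, b, c]
    rw [cob2_apply] at h1
    simp only [Matrix.cons_val_zero, Matrix.cons_val_one, Matrix.head_cons,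
      Matrix.cons_val_two, Matrix.tail_cons] at h1
    have h2 : (0 : M.cochain 3) ![a, b, c] = 0 := rfl
    rw [h2] at h1
    rw [← sub_eq_zero]
    rw [show f ![a, b] + f ![a * b, c] - (M.smul a (f ![b, c]) + f ![a, b * c])
      = -(M.smul a (f ![b, c]) - f ![a * b, c] + f ![a, b * c] - f ![a, b])
      from by abel, h1, neg_zero]
  obtain ⟨G, hG1, hG2⟩ := root_extend M hW (fun s t => f ![s, t]) hcoc
    (fun w => g (fun _ => (w : S)))
    (by
      intro x y w hxyw
      have hwt : Wtuple W ![(x : S), (y : S)] := by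
        rw [wtuple2]
        refine ⟨x.2, y.2, ?_⟩
        simp only [Matrix.cons_val_zero, Matrix.cons_val_one, Matrix.head_cons]
        rw [hxyw]; exact w.2
      have h1 : f ![(x : S), (y : S)] = u ![(x : S), (y : S)] := by
        rw [← congrFun huz ![(x : S), (y : S)]]
        show u _ + z _ = u _
        rw [hz' _ hwt, add_zero]
      rw [← hg, cob1_apply] at h1
      simp only [Matrix.cons_val_zero, Matrix.cons_val_one, Matrix.head_cons] at h1
      rw [hxyw] at h1
      show g (fun _ => (w : S)) = M.smul (x : S) (g fun _ => (y : S)) +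
        (g fun _ => (x : S)) - f ![(x : S), (y : S)]
      rw [h1]
      abel
    )
  have hG2' : ∀ s t : S, G (s * t) = M.smul s (G t) + G s - f ![s, t] := hG2
  show f ∈ (M.cob 1).range
  refine ⟨fun x => G (x 0), ?_⟩
  funext x
  rw [cob1_apply]
  show M.smul (x 0) (G (x 1)) - G (x 0 * x 1) + G (x 0) = f x
  rw [hG2']
  conv_rhs => rw [tup2_eq x]
  abel

end RootAux

/-- If `W` is a root of a semigroup `S` then, for every
`S`-module `A`, the restriction homomorphism `θⁿ_W : Hⁿ(S,A) → Hⁿ(S,W,A)` is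
an isomorphism for `n = 0, 1` and a monomorphism for `n = 2`. -/
theorem theta_iso_low_degrees_of_root
    (S : Type) [Semigroup S] (W : Set S) (hW : IsRoot W) (M : SgModule S) :
    Function.Bijective (M.theta W 0) ∧ Function.Bijective (M.theta W 1) ∧
      Function.Injective (M.theta W 2) := by
  exact ⟨⟨RootAux.theta_injective M W 0 (RootAux.inj0 M),
      RootAux.theta_surjective M W 0 (RootAux.surj0 M hW)⟩,
    ⟨RootAux.theta_injective M W 1 (RootAux.inj1 M hW),
      RootAux.theta_surjective M W 1 (RootAux.surj1 M hW)⟩,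
    RootAux.theta_injective M W 2 (RootAux.inj2 M hW)⟩
end
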